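/- arXiv:1805.08146 — 6 statements merged into one kernel-verified Lean document; each statement's English description precedes it below -/
import Mathlib

section
/- The number of sublattices of index n in the 3-dimensional lattice Z^3 equals ω(n) := ∑_{k ∣ n} k·σ₁(k). -/
/-- σ₁(n): the sum of the divisors of `n`. -/
def sigma1 (n : ℕ) : ℕ := ∑ d ∈ n.divisors, d

/-- ω(n) = ∑_{k ∣ n} k · σ₁(k). -/
def omegaFn (n : ℕ) : ℕ := ∑ k ∈ n.divisors, k * sigma1 k

open AddSubgroup
variable {G : Type*} [AddCommGroup G]

/-- the hom (g,k) ↦ (g + k•g₀, k*a) -/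
def fHom (g₀ : G) (a : ℤ) : G × ℤ →+ G × ℤ where
  toFun p := (p.1 + p.2 • g₀, p.2 * a)
  map_zero' := by simp
  map_add' p q := by
    ext
    · simp [add_smul]; abel
    · simp [add_mul]

def mkH (K : AddSubgroup G) (g₀ : G) (a : ℤ) : AddSubgroup (G × ℤ) :=
  (K.prod ⊤).map (fHom g₀ a)

lemma mem_mkH {K : AddSubgroup G} {g₀ : G} {a : ℤ} {p : G × ℤ} :
    p ∈ mkH K g₀ a ↔ ∃ k : ℤ, p.2 = k * a ∧ p.1 - k • g₀ ∈ K := by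
  constructor
  · rintro ⟨⟨κ, k⟩, ⟨hκ, -⟩, rfl⟩
    exact ⟨k, rfl, by simpa [fHom] using hκ⟩
  · rintro ⟨k, h2, h1⟩
    exact ⟨(p.1 - k • g₀, k), ⟨h1, trivial⟩, by simp [fHom, h2.symm]⟩

lemma fHom_injective (g₀ : G) {a : ℤ} (ha : a ≠ 0) : Function.Injective (fHom g₀ a) := by
  intro p q h
  have h2 : p.2 = q.2 := by
    have := congrArg Prod.snd h
    simpa [fHom, mul_eq_mul_right_iff, ha] using this
  have h1 := congrArg Prod.fst h
  simp only [fHom, AddMonoidHom.coe_mk, ZeroHom.coe_mk] at h1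
  rw [h2] at h1
  exact Prod.ext (by exact add_right_cancel h1) h2

lemma snd_surjective : Function.Surjective (AddMonoidHom.snd G ℤ) := fun m => ⟨(0, m), rfl⟩

lemma fHom_range (g₀ : G) (a : ℤ) :
    (fHom g₀ a).range = (zmultiples a).comap (AddMonoidHom.snd G ℤ) := by
  ext p
  simp only [AddMonoidHom.mem_range, mem_comap, AddMonoidHom.coe_snd, mem_zmultiples_iff]
  constructor
  · rintro ⟨q, rfl⟩
    exact ⟨q.2, by simp [fHom, mul_comm]⟩
  · rintro ⟨k, hk⟩
    exact ⟨(p.1 - k • g₀, k), by ext <;> simp [fHom, ← hk, mul_comm]⟩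

lemma mkH_index (K : AddSubgroup G) (g₀ : G) {a : ℤ} (ha : a ≠ 0) :
    (mkH K g₀ a).index = K.index * a.natAbs := by
  rw [mkH, AddSubgroup.index_map_of_injective _ (fHom_injective g₀ ha), fHom_range,
    AddSubgroup.index_comap_of_surjective _ snd_surjective, Int.index_zmultiples,
    AddSubgroup.index_prod, AddSubgroup.index_top, mul_one]

lemma comap_inl_mkH {K : AddSubgroup G} {g₀ : G} {a : ℤ} (ha : a ≠ 0) :
    (mkH K g₀ a).comap (AddMonoidHom.inl G ℤ) = K := by
  ext g
  simp only [mem_comap, AddMonoidHom.inl_apply, mem_mkH]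
  constructor
  · rintro ⟨k, hk, hg⟩
    have hk0 : k = 0 := by
      rcases mul_eq_zero.1 hk.symm with h | h
      · exact h
      · exact absurd h ha
    simpa [hk0] using hg
  · intro hg
    exact ⟨0, by simp, by simpa using hg⟩

lemma self_mem_mkH (K : AddSubgroup G) (g₀ : G) (a : ℤ) : (g₀, a) ∈ mkH K g₀ a :=
  mem_mkH.2 ⟨1, by simp, by simpa using K.zero_mem⟩

lemma sub_mem_of_mem_mkH {K : AddSubgroup G} {g₀ g₁ : G} {a : ℤ} (ha : a ≠ 0)
    (h : (g₁, a) ∈ mkH K g₀ a) : g₁ - g₀ ∈ K := by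
  obtain ⟨k, hk, hg⟩ := mem_mkH.1 h
  have hk1 : k = 1 := by
    have h1 : (k - 1) * a = 0 := by rw [sub_mul, ← hk]; ring
    rcases mul_eq_zero.1 h1 with h | h
    · linarith
    · exact absurd h ha
  rw [hk1] at hg
  simpa using hg

lemma mkH_congr {K : AddSubgroup G} {g₀ g₁ : G} (a : ℤ) (h : g₀ - g₁ ∈ K) :
    mkH K g₀ a = mkH K g₁ a := by
  ext p
  rw [mem_mkH, mem_mkH]
  constructor
  · rintro ⟨k, hk, hg⟩
    refine ⟨k, hk, ?_⟩
    have heq : p.1 - k • g₁ = (p.1 - k • g₀) + k • (g₀ - g₁) := by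
      rw [smul_sub]; abel
    rw [heq]
    exact K.add_mem hg (K.zsmul_mem h k)
  · rintro ⟨k, hk, hg⟩
    refine ⟨k, hk, ?_⟩
    have heq : p.1 - k • g₀ = (p.1 - k • g₁) + k • (g₁ - g₀) := by
      rw [smul_sub]; abel
    rw [heq]
    exact K.add_mem hg (K.zsmul_mem (by simpa using K.neg_mem h) k)

lemma zmult_neg {A : Type*} [AddGroup A] (x : A) : zmultiples (-x) = zmultiples x := by
  ext y
  simp only [mem_zmultiples_iff]
  constructor
  · rintro ⟨k, rfl⟩; exact ⟨-k, by simp⟩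
  · rintro ⟨k, rfl⟩; exact ⟨-k, by simp⟩

lemma exists_mkH_rep (H : AddSubgroup (G × ℤ)) (hH : H.index ≠ 0) :
    ∃ (K : AddSubgroup G) (g₀ : G) (a : ℤ), 0 < a ∧ H = mkH K g₀ a := by
  obtain ⟨a₀, hP⟩ := Int.subgroup_cyclic (H.map (AddMonoidHom.snd G ℤ))
  rw [← AddSubgroup.zmultiples_eq_closure] at hP
  have ha₀ : a₀ ≠ 0 := by
    rintro rfl
    have hb : H ≤ (⊤ : AddSubgroup G).prod ⊥ := by
      intro p hp
      refine ⟨trivial, ?_⟩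
      have hm : p.2 ∈ H.map (AddMonoidHom.snd G ℤ) := ⟨p, hp, rfl⟩
      rw [hP] at hm
      simpa using hm
    have hdvd := AddSubgroup.index_dvd_of_le hb
    rw [AddSubgroup.index_prod, AddSubgroup.index_top, AddSubgroup.index_bot,
      Nat.card_eq_zero_of_infinite, one_mul] at hdvd
    exact hH (zero_dvd_iff.1 hdvd)
  set a : ℤ := (a₀.natAbs : ℤ) with haa
  have hPa : H.map (AddMonoidHom.snd G ℤ) = zmultiples a := by
    rw [hP, haa]
    rcases Int.natAbs_eq a₀ with h1 | h1
    · rw [← h1]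
    · conv_lhs => rw [h1]
      exact zmult_neg _
  have hapos : 0 < a := by
    have := Int.natAbs_pos.2 ha₀
    omega
  have hamem : a ∈ H.map (AddMonoidHom.snd G ℤ) := by
    rw [hPa]; exact mem_zmultiples a
  obtain ⟨p, hpH, hpa⟩ := hamem
  refine ⟨H.comap (AddMonoidHom.inl G ℤ), p.1, a, hapos, ?_⟩
  have hg₀ : (p.1, a) ∈ H := by
    have : p = (p.1, a) := by
      rw [← hpa]; rfl
    rwa [← this]
  ext q
  obtain ⟨g, m⟩ := q
  rw [mem_mkH]
  constructor
  · intro hq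
    have hm : m ∈ zmultiples a := by
      rw [← hPa]; exact ⟨(g, m), hq, rfl⟩
    obtain ⟨k, hk⟩ := mem_zmultiples_iff.1 hm
    refine ⟨k, by rw [← hk]; simp [mul_comm], ?_⟩
    have hsub : (g, m) - k • (p.1, a) ∈ H := H.sub_mem hq (H.zsmul_mem hg₀ k)
    have heq : (g, m) - k • (p.1, a) = (g - k • p.1, 0) := by
      ext
      · simp
      · simp [← hk, mul_comm]
    rw [heq] at hsub
    exact hsub
  · rintro ⟨k, hm, hκ⟩
    have hκ' : ((g - k • p.1, 0) : G × ℤ) ∈ H := hκ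
    have heq : ((g, m) : G × ℤ) = (g - k • p.1, 0) + k • (p.1, a) := by
      ext
      · simp
      · simpa using hm
    rw [heq]
    exact H.add_mem hκ' (H.zsmul_mem hg₀ k)

/-- The canonical positive integer `n / K.index` as an integer. -/
noncomputable def stepF (n : ℕ) (hn : n ≠ 0) :
    (Σ K : {K : AddSubgroup G // K.index ∣ n ∧ K.index ≠ 0}, G ⧸ K.val) →
      {H : AddSubgroup (G × ℤ) // H.index = n} :=
  fun s => ⟨mkH s.1.val s.2.out ((n / s.1.val.index : ℕ) : ℤ), by
    have hpos : 0 < n / s.1.val.index :=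
      Nat.div_pos (Nat.le_of_dvd (Nat.pos_of_ne_zero hn) s.1.2.1)
        (Nat.pos_of_ne_zero s.1.2.2)
    rw [mkH_index _ _ (by exact_mod_cast hpos.ne' : ((n / s.1.val.index : ℕ) : ℤ) ≠ 0),
      Int.natAbs_natCast, Nat.mul_div_cancel' s.1.2.1]⟩

lemma stepF_bijective (n : ℕ) (hn : n ≠ 0) :
    Function.Bijective (stepF (G := G) n hn) := by
  constructor
  · rintro ⟨⟨K, hK⟩, x⟩ ⟨⟨K', hK'⟩, x'⟩ h
    have h' : mkH K x.out ((n / K.index : ℕ) : ℤ)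
        = mkH K' x'.out ((n / K'.index : ℕ) : ℤ) := congrArg Subtype.val h
    have ha : ((n / K.index : ℕ) : ℤ) ≠ 0 := by
      have := Nat.div_pos (Nat.le_of_dvd (Nat.pos_of_ne_zero hn) hK.1)
        (Nat.pos_of_ne_zero hK.2)
      exact_mod_cast this.ne'
    have ha' : ((n / K'.index : ℕ) : ℤ) ≠ 0 := by
      have := Nat.div_pos (Nat.le_of_dvd (Nat.pos_of_ne_zero hn) hK'.1)
        (Nat.pos_of_ne_zero hK'.2)
      exact_mod_cast this.ne'
    have hKK : K = K' := by
      rw [← comap_inl_mkH (K := K) (g₀ := x.out) ha, h', comap_inl_mkH ha']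
    subst hKK
    have hxx : x = x' := by
      have hmem : (x'.out, ((n / K.index : ℕ) : ℤ)) ∈ mkH K x.out ((n / K.index : ℕ) : ℤ) := by
        rw [h']
        exact self_mem_mkH _ _ _
      have hsub := sub_mem_of_mem_mkH ha hmem
      rw [← QuotientAddGroup.out_eq' x, ← QuotientAddGroup.out_eq' x']
      rw [QuotientAddGroup.eq]
      show -x.out + x'.out ∈ K
      rw [neg_add_eq_sub]
      exact hsub
    subst hxx
    rfl
  · rintro ⟨H, hH⟩
    have hH0 : H.index ≠ 0 := by rw [hH]; exact hn
    obtain ⟨K, g₀, a, hapos, rfl⟩ := exists_mkH_rep H hH0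
    have hm := mkH_index K g₀ hapos.ne'
    rw [hH] at hm
    have hKdvd : K.index ∣ n := ⟨a.natAbs, hm⟩
    have hK0 : K.index ≠ 0 := by
      intro h0
      rw [h0, zero_mul] at hm
      exact hn hm
    refine ⟨⟨⟨K, hKdvd, hK0⟩, QuotientAddGroup.mk g₀⟩, ?_⟩
    apply Subtype.ext
    show mkH K (QuotientAddGroup.mk g₀ : G ⧸ K).out ((n / K.index : ℕ) : ℤ) = mkH K g₀ a
    have hdiv : ((n / K.index : ℕ) : ℤ) = a := by
      rw [hm, Nat.mul_div_cancel_left _ (Nat.pos_of_ne_zero hK0)]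
      exact Int.natAbs_of_nonneg hapos.le
    rw [hdiv]
    apply mkH_congr
    have : ((QuotientAddGroup.mk g₀ : G ⧸ K).out : G ⧸ K) = QuotientAddGroup.mk g₀ :=
      QuotientAddGroup.out_eq' _
    have h2 := QuotientAddGroup.eq.1 this
    rwa [neg_add_eq_sub, ← neg_mem_iff, neg_sub] at h2

lemma nat_card_sigma' {ι : Type*} [Fintype ι] (β : ι → Type*) [∀ i, Finite (β i)] :
    Nat.card (Σ i, β i) = ∑ i, Nat.card (β i) := by
  haveI := fun i => Fintype.ofFinite (β i)
  simp only [Nat.card_eq_fintype_card]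
  exact Fintype.card_sigma

theorem card_step (n : ℕ) (hn : n ≠ 0)
    (hfin : ∀ d : ℕ, d ≠ 0 → Finite {K : AddSubgroup G // K.index = d}) :
    Nat.card {H : AddSubgroup (G × ℤ) // H.index = n}
      = ∑ d ∈ n.divisors, Nat.card {K : AddSubgroup G // K.index = d} * d := by
  classical
  haveI hfin' : ∀ d : {d : ℕ // d ∈ n.divisors}, Finite {K : AddSubgroup G // K.index = d.1} :=
    fun d => hfin d.1 (Nat.pos_of_mem_divisors d.2).ne'
  let e : {K : AddSubgroup G // K.index ∣ n ∧ K.index ≠ 0}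
      ≃ Σ d : {d : ℕ // d ∈ n.divisors}, {K : AddSubgroup G // K.index = d.1} :=
  { toFun := fun K => ⟨⟨K.1.index, Nat.mem_divisors.2 ⟨K.2.1, hn⟩⟩, ⟨K.1, rfl⟩⟩
    invFun := fun p => ⟨p.2.1, by
      rw [p.2.2]
      exact ⟨(Nat.mem_divisors.1 p.1.2).1, (Nat.pos_of_mem_divisors p.1.2).ne'⟩⟩
    left_inv := fun K => rfl
    right_inv := fun p => by
      obtain ⟨⟨d, hd⟩, K, hK⟩ := p
      have hd' : K.index = d := hK
      subst hd'
      rfl }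
  rw [← Nat.card_eq_of_bijective _ (stepF_bijective n hn)]
  haveI hq1 : ∀ (K : {K : AddSubgroup G // K.index ∣ n ∧ K.index ≠ 0}), Finite (G ⧸ K.val) :=
    fun K => Nat.finite_of_card_ne_zero (by rw [← AddSubgroup.index_eq_card]; exact K.2.2)
  haveI hq2 : ∀ (d : {d : ℕ // d ∈ n.divisors}) (K : {K : AddSubgroup G // K.index = d.1}),
      Finite (G ⧸ K.val) := fun d K => Nat.finite_of_card_ne_zero
        (by rw [← AddSubgroup.index_eq_card, K.2]; exact (Nat.pos_of_mem_divisors d.2).ne')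
  have h1 : Nat.card (Σ K : {K : AddSubgroup G // K.index ∣ n ∧ K.index ≠ 0}, G ⧸ K.val)
      = Nat.card (Σ d : {d : ℕ // d ∈ n.divisors},
          Σ K : {K : AddSubgroup G // K.index = d.1}, G ⧸ K.val) := by
    refine Nat.card_congr
      { toFun := fun s => ⟨⟨s.1.1.index, Nat.mem_divisors.2 ⟨s.1.2.1, hn⟩⟩, ⟨s.1.1, rfl⟩, s.2⟩
        invFun := fun t => ⟨⟨t.2.1.1, by
          rw [t.2.1.2]
          exact ⟨(Nat.mem_divisors.1 t.1.2).1, (Nat.pos_of_mem_divisors t.1.2).ne'⟩⟩, t.2.2⟩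
        left_inv := fun s => rfl
        right_inv := fun t => by
          obtain ⟨⟨d, hd⟩, ⟨K, hK⟩, x⟩ := t
          have hd' : K.index = d := hK
          subst hd'
          rfl }
  rw [h1, nat_card_sigma']
  rw [← Finset.sum_coe_sort n.divisors (fun d => Nat.card {K : AddSubgroup G // K.index = d} * d)]
  apply Finset.sum_congr rfl
  intro d _
  haveI := Fintype.ofFinite {K : AddSubgroup G // K.index = d.1}
  rw [nat_card_sigma']
  have hcard : ∀ K : {K : AddSubgroup G // K.index = d.1}, Nat.card (G ⧸ K.val) = d.1 :=
    fun K => by rw [← AddSubgroup.index_eq_card, K.2]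
  simp only [hcard, Finset.sum_const, Finset.card_univ, smul_eq_mul,
    Nat.card_eq_fintype_card]

theorem step_finite (n : ℕ) (hn : n ≠ 0)
    (hfin : ∀ d : ℕ, d ≠ 0 → Finite {K : AddSubgroup G // K.index = d}) :
    Finite {H : AddSubgroup (G × ℤ) // H.index = n} := by
  classical
  haveI hfin' : ∀ d : {d : ℕ // d ∈ n.divisors}, Finite {K : AddSubgroup G // K.index = d.1} :=
    fun d => hfin d.1 (Nat.pos_of_mem_divisors d.2).ne'
  let e : {K : AddSubgroup G // K.index ∣ n ∧ K.index ≠ 0}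
      ≃ Σ d : {d : ℕ // d ∈ n.divisors}, {K : AddSubgroup G // K.index = d.1} :=
  { toFun := fun K => ⟨⟨K.1.index, Nat.mem_divisors.2 ⟨K.2.1, hn⟩⟩, ⟨K.1, rfl⟩⟩
    invFun := fun p => ⟨p.2.1, by
      rw [p.2.2]
      exact ⟨(Nat.mem_divisors.1 p.1.2).1, (Nat.pos_of_mem_divisors p.1.2).ne'⟩⟩
    left_inv := fun K => rfl
    right_inv := fun p => by
      obtain ⟨⟨d, hd⟩, K, hK⟩ := p
      have hd' : K.index = d := hK
      subst hd'
      rfl }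
  haveI : Finite {K : AddSubgroup G // K.index ∣ n ∧ K.index ≠ 0} := Finite.of_equiv _ e.symm
  haveI : ∀ (K : {K : AddSubgroup G // K.index ∣ n ∧ K.index ≠ 0}), Finite (G ⧸ K.val) :=
    fun K => Nat.finite_of_card_ne_zero (by rw [← AddSubgroup.index_eq_card]; exact K.2.2)
  exact Finite.of_surjective _ (stepF_bijective (G := G) n hn).surjective

lemma eq_zmultiples_of_index {K : AddSubgroup ℤ} {d : ℕ} (h : K.index = d) :
    K = zmultiples (d : ℤ) := by
  obtain ⟨a, hK⟩ := Int.subgroup_cyclic K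
  rw [← AddSubgroup.zmultiples_eq_closure] at hK
  have hna : a.natAbs = d := by rw [hK, Int.index_zmultiples] at h; exact h
  rcases Int.natAbs_eq a with h1 | h1
  · rw [hK, h1, hna]
  · rw [hK, h1, zmult_neg, hna]

lemma index_zmultiples_nat (d : ℕ) : (zmultiples (d : ℤ)).index = d := by
  rw [Int.index_zmultiples, Int.natAbs_natCast]

noncomputable instance uniqueZ (d : ℕ) : Unique {K : AddSubgroup ℤ // K.index = d} where
  default := ⟨zmultiples (d : ℤ), index_zmultiples_nat d⟩
  uniq := fun K => Subtype.ext (eq_zmultiples_of_index K.2)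

lemma card_Z (d : ℕ) : Nat.card {K : AddSubgroup ℤ // K.index = d} = 1 :=
  Nat.card_unique

lemma finite_Z (d : ℕ) : Finite {K : AddSubgroup ℤ // K.index = d} := inferInstance

lemma card_Z2 (d : ℕ) (hd : d ≠ 0) :
    Nat.card {K : AddSubgroup (ℤ × ℤ) // K.index = d} = sigma1 d := by
  rw [card_step d hd (fun k _ => finite_Z k), sigma1]
  refine Finset.sum_congr rfl fun k _ => ?_
  rw [card_Z, one_mul]

lemma finite_Z2 (d : ℕ) (hd : d ≠ 0) : Finite {K : AddSubgroup (ℤ × ℤ) // K.index = d} :=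
  step_finite d hd (fun k _ => finite_Z k)

lemma card_transfer {A B : Type*} [AddGroup A] [AddGroup B] (e : A ≃+ B) (n : ℕ) :
    Nat.card {H : AddSubgroup A // H.index = n}
      = Nat.card {H : AddSubgroup B // H.index = n} := by
  have key : ∀ (H : AddSubgroup A),
      (H.comap e.symm.toAddMonoidHom).comap e.toAddMonoidHom = H := fun H => by
    ext x; simp [AddSubgroup.mem_comap]
  have key' : ∀ (H : AddSubgroup B),
      (H.comap e.toAddMonoidHom).comap e.symm.toAddMonoidHom = H := fun H => by
    ext x; simp [AddSubgroup.mem_comap]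
  apply Nat.card_eq_of_bijective
    (fun H => (⟨H.1.comap e.symm.toAddMonoidHom, by
      rw [AddSubgroup.index_comap_of_surjective _ e.symm.surjective, H.2]⟩ :
        {H : AddSubgroup B // H.index = n}))
  constructor
  · intro H₁ H₂ h
    apply Subtype.ext
    have h2 := congrArg (fun s : {H : AddSubgroup B // H.index = n} =>
      AddSubgroup.comap e.toAddMonoidHom s.1) h
    dsimp only at h2
    rwa [key, key] at h2
  · intro K
    refine ⟨⟨K.1.comap e.toAddMonoidHom, by
      rw [AddSubgroup.index_comap_of_surjective _ e.surjective, K.2]⟩, ?_⟩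
    exact Subtype.ext (key' K.1)

/-- The number of sublattices of index `n` in `ℤ³` equals `ω(n)`. -/
theorem num_sublattices_Z3 (n : ℕ) (hn : 0 < n) :
    Nat.card {H : AddSubgroup (ℤ × ℤ × ℤ) // H.index = n} = omegaFn n := by
  have hn' : n ≠ 0 := hn.ne'
  rw [← card_transfer (AddEquiv.prodAssoc : (ℤ × ℤ) × ℤ ≃+ ℤ × ℤ × ℤ) n,
    card_step n hn' (fun d hd => finite_Z2 d hd), omegaFn]
  refine Finset.sum_congr rfl fun k hk => ?_
  rw [card_Z2 k (Nat.pos_of_mem_divisors hk).ne', mul_comm]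
end

section
/- Let ℓ : Z^2 → Z^2 be the automorphism (x,y) ↦ (−y,x). A subgroup H ≤ Z^2 of finite index satisfies ℓ(H) = H if and only if H is generated by a pair of elements of the form (p,q) and (−q,p); in this case the index |Z^2 : H| equals p² + q². -/
/-- The rotation automorphism `ℓ : ℤ² → ℤ²`, `(x, y) ↦ (-y, x)`, as an additive hom. -/
def ell : (ℤ × ℤ) →+ ℤ × ℤ :=
  AddMonoidHom.mk' (fun p => (-p.2, p.1)) (by intro a b; simp [Prod.ext_iff]; ring)

noncomputable section EllAux

def e2 : (ℤ × ℤ) ≃+ GaussianInt where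
  toFun p := ⟨p.1, p.2⟩
  invFun z := (z.re, z.im)
  left_inv _ := rfl
  right_inv _ := rfl
  map_add' _ _ := rfl

def gEquivFun : GaussianInt ≃ₗ[ℤ] (Fin 2 → ℤ) :=
  AddEquiv.toIntLinearEquiv
    { toFun := fun z => ![z.re, z.im]
      invFun := fun v => ⟨v 0, v 1⟩
      left_inv := fun _ => rfl
      right_inv := fun v => by funext i; fin_cases i <;> rfl
      map_add' := fun a b => by funext i; fin_cases i <;> simp }

def gBasis : Module.Basis (Fin 2) ℤ GaussianInt := Module.Basis.ofEquivFun gEquivFun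
instance : Module.Free ℤ GaussianInt := Module.Free.of_basis gBasis
instance : Module.Finite ℤ GaussianInt := Module.Finite.of_basis gBasis

lemma gnorm (z : GaussianInt) : Algebra.norm ℤ z = z.re ^ 2 + z.im ^ 2 := by
  rw [Algebra.norm_eq_matrix_det gBasis z, Matrix.det_fin_two]
  simp only [Algebra.leftMulMatrix_apply, LinearMap.toMatrix_apply,
    Module.Basis.ofEquivFun_repr_apply, gBasis, Module.Basis.coe_ofEquivFun, LinearMap.mul_apply']
  simp [gEquivFun, AddEquiv.toIntLinearEquiv, Function.update, Zsqrtd.re_mul, Zsqrtd.im_mul]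
  simp [DFunLike.coe, EquivLike.coe, EquivLike.inv, Equiv.symm, Pi.single_apply, Zsqrtd.re_mul, Zsqrtd.im_mul]
  ring

lemma gi_mul (p q : ℤ) : (⟨0, 1⟩ : GaussianInt) * ⟨p, q⟩ = ⟨-q, p⟩ := by
  ext <;> simp [Zsqrtd.re_mul, Zsqrtd.im_mul]

lemma decomp (c x : GaussianInt) :
    c * x = (c.re : GaussianInt) * x + (c.im : GaussianInt) * ((⟨0, 1⟩ : GaussianInt) * x) := by
  ext <;> simp [Zsqrtd.re_mul, Zsqrtd.im_mul]

lemma intCast_mul_mem (H : AddSubgroup GaussianInt) (n : ℤ) {y : GaussianInt}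
    (hy : y ∈ H) : (n : GaussianInt) * y ∈ H := by
  induction n using Int.induction_on with
  | zero => simpa using H.zero_mem
  | succ k ih => push_cast; rw [add_mul, one_mul]; exact H.add_mem ih hy
  | pred k ih => push_cast; rw [sub_mul, one_mul]; exact H.sub_mem ih hy

lemma mem_closure_aux (z w : GaussianInt) :
    (w.re : GaussianInt) * z + (w.im : GaussianInt) * ((⟨0, 1⟩ : GaussianInt) * z) ∈
      AddSubgroup.closure {z, ⟨0, 1⟩ * z} :=
  add_mem (intCast_mul_mem _ _ (AddSubgroup.subset_closure (Set.mem_insert _ _)))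
    (intCast_mul_mem _ _ (AddSubgroup.subset_closure (Set.mem_insert_of_mem _ rfl)))

lemma span_toAddSubgroup (z : GaussianInt) :
    (Ideal.span {z}).toAddSubgroup = AddSubgroup.closure {z, ⟨0, 1⟩ * z} := by
  apply le_antisymm
  · intro x hx
    rw [Submodule.mem_toAddSubgroup _] at hx
    obtain ⟨w, rfl⟩ := Ideal.mem_span_singleton'.mp hx
    rw [decomp w z]
    exact mem_closure_aux z w
  · rw [AddSubgroup.closure_le]
    intro x hx
    simp only [Set.mem_insert_iff, Set.mem_singleton_iff] at hx
    rcases hx with rfl | rfl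
    · exact (Submodule.mem_toAddSubgroup _).mpr (Ideal.mem_span_singleton_self _)
    · exact (Submodule.mem_toAddSubgroup _).mpr
        (Ideal.mul_mem_left _ _ (Ideal.mem_span_singleton_self _))

lemma map_closure_pair (p q : ℤ) :
    (AddSubgroup.closure {((p, q) : ℤ × ℤ), (-q, p)}).map (e2 : (ℤ × ℤ) →+ GaussianInt) =
      (Ideal.span {(⟨p, q⟩ : GaussianInt)}).toAddSubgroup := by
  rw [AddMonoidHom.map_closure, span_toAddSubgroup, gi_mul]
  congr 1
  rw [Set.image_insert_eq, Set.image_singleton]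
  rfl

lemma index_map_e2 (H : AddSubgroup (ℤ × ℤ)) :
    (H.map (e2 : (ℤ × ℤ) →+ GaussianInt)).index = H.index := by
  rw [AddSubgroup.map_equiv_eq_comap_symm]
  exact AddSubgroup.index_comap_of_surjective _ e2.symm.surjective

lemma index_closure_pair (p q : ℤ) :
    (AddSubgroup.closure {((p, q) : ℤ × ℤ), (-q, p)}).index = (p ^ 2 + q ^ 2).natAbs := by
  rw [← index_map_e2, map_closure_pair]
  have h1 : (Ideal.span {(⟨p, q⟩ : GaussianInt)}).toAddSubgroup.index
      = Nat.card (GaussianInt ⧸ Ideal.span {(⟨p, q⟩ : GaussianInt)}) :=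
    AddSubgroup.index_eq_card _
  rw [h1, ← Submodule.cardQuot_apply, ← Ideal.absNorm_apply, Ideal.absNorm_span_singleton,
    gnorm]

end EllAux

/-- A finite-index subgroup `H ≤ ℤ²` satisfies `ℓ(H) = H` iff `H` is generated by a pair
of elements `(p, q)`, `(-q, p)`; in this case `|ℤ² : H| = p² + q²`. -/
theorem ell_invariant_iff (H : AddSubgroup (ℤ × ℤ)) (hfin : H.index ≠ 0) :
    (H.map ell = H ↔ ∃ p q : ℤ, H = AddSubgroup.closure {(p, q), (-q, p)}) ∧
    ∀ p q : ℤ, H = AddSubgroup.closure {(p, q), (-q, p)} →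
      (H.index : ℤ) = p ^ 2 + q ^ 2 := by
  constructor
  · constructor
    · intro hmap
      -- build the ideal
      set S := H.map (e2 : (ℤ × ℤ) →+ GaussianInt) with hS
      have hi : ∀ x ∈ S, (⟨0, 1⟩ : GaussianInt) * x ∈ S := by
        rintro x ⟨h, hh, rfl⟩
        refine ⟨ell h, ?_, ?_⟩
        · rw [← hmap]; exact AddSubgroup.mem_map_of_mem _ hh
        · rw [show ell h = (-h.2, h.1) from rfl]
          show (⟨-h.2, h.1⟩ : GaussianInt) = _
          rw [show (e2 : (ℤ × ℤ) →+ GaussianInt) h = (⟨h.1, h.2⟩ : GaussianInt) from rfl, gi_mul]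
      let J : Ideal GaussianInt :=
        { carrier := S
          add_mem' := fun ha hb => S.add_mem ha hb
          zero_mem' := S.zero_mem
          smul_mem' := fun c x hx => by
            have h2 := hi x hx
            show c * x ∈ S
            rw [decomp]
            exact S.add_mem (intCast_mul_mem _ _ hx) (intCast_mul_mem _ _ h2) }
      obtain ⟨z, hz⟩ := (IsPrincipalIdealRing.principal J).principal
      refine ⟨z.re, z.im, ?_⟩
      have hinj : Function.Injective (AddSubgroup.map (e2 : (ℤ × ℤ) →+ GaussianInt)) :=
        AddSubgroup.map_injective e2.injective
      apply hinj
      rw [map_closure_pair]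
      have hJ : S = J.toAddSubgroup := SetLike.ext fun x => Iff.rfl
      rw [← hS, hJ, hz]
    · rintro ⟨p, q, rfl⟩
      rw [AddMonoidHom.map_closure]
      have himg : ell '' {((p, q) : ℤ × ℤ), (-q, p)} = {(-q, p), (-p, -q)} := by
        rw [Set.image_insert_eq, Set.image_singleton]; rfl
      rw [himg]
      apply le_antisymm
      · rw [AddSubgroup.closure_le]
        rintro x (rfl | rfl)
        · exact AddSubgroup.subset_closure (by simp)
        · have : ((-p, -q) : ℤ × ℤ) = -(p, q) := rfl
          rw [this]
          exact neg_mem (AddSubgroup.subset_closure (by simp))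
      · rw [AddSubgroup.closure_le]
        rintro x (rfl | rfl)
        · have : ((p, q) : ℤ × ℤ) = -(-p, -q) := by simp
          rw [this]
          exact neg_mem (AddSubgroup.subset_closure (by simp))
        · exact AddSubgroup.subset_closure (by simp)
  · intro p q hpq
    rw [hpq, index_closure_pair]
    rw [Nat.cast_natAbs]
    push_cast
    exact abs_of_nonneg (by positivity)
end

section
/- Let ℓ : Z^2 → Z^2 be the automorphism (x,y) ↦ (−y,x), and let τ(n) be the number of pairs (s,t) of integers with s > 0, t ≥ 0 and s² + t² = n. Then the number of subgroups H of index n in Z^2 with ℓ(H) = H equals τ(n). -/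
/-- `τ(n)`: the number of pairs `(s, t)` of integers with `s > 0`, `t ≥ 0`, `s² + t² = n`. -/
noncomputable def tauFn (n : ℕ) : ℕ :=
  Nat.card {st : ℤ × ℤ // 0 < st.1 ∧ 0 ≤ st.2 ∧ st.1 ^ 2 + st.2 ^ 2 = n}

open Zsqrtd

namespace EllAux

def giEquivFun : GaussianInt ≃ₗ[ℤ] (Fin 2 → ℤ) where
  toFun z := ![z.re, z.im]
  invFun v := ⟨v 0, v 1⟩
  map_add' a b := by funext i; fin_cases i <;> simp
  map_smul' m z := by
    funext i
    have : m • z = (m : GaussianInt) * z := (zsmul_eq_mul _ _).trans (by simp)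
    fin_cases i <;> simp [this, Zsqrtd.re_smul, Zsqrtd.im_smul]
  left_inv z := by ext <;> simp
  right_inv v := by funext i; fin_cases i <;> simp

noncomputable def giBasis : Module.Basis (Fin 2) ℤ GaussianInt := Module.Basis.ofEquivFun giEquivFun

instance : Module.Free ℤ GaussianInt := Module.Free.of_basis giBasis
instance : Module.Finite ℤ GaussianInt := Module.Finite.of_basis giBasis

lemma algebraNorm_eq (z : GaussianInt) : Algebra.norm ℤ z = z.norm := by
  rw [Algebra.norm_eq_matrix_det giBasis, Matrix.det_fin_two]
  simp [Algebra.leftMulMatrix_apply, LinearMap.toMatrix_apply, giBasis,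
    Module.Basis.coe_ofEquivFun, Module.Basis.ofEquivFun_repr_apply,
    giEquivFun, Zsqrtd.norm_def, Zsqrtd.re_mul, Zsqrtd.im_mul]

lemma index_span (z : GaussianInt) :
    (Ideal.span {z}).toAddSubgroup.index = z.norm.natAbs := by
  have h1 : (Ideal.span {z}).toAddSubgroup.index
      = Submodule.cardQuot (Ideal.span {z} : Ideal GaussianInt) := rfl
  rw [h1, show Submodule.cardQuot (Ideal.span {z} : Ideal GaussianInt)
      = Ideal.absNorm (Ideal.span {z}) from rfl, Ideal.absNorm_span_singleton,
    algebraNorm_eq]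

/-- The additive equivalence `ℤ × ℤ ≃+ ℤ[i]`. -/
def e2 : (ℤ × ℤ) ≃+ GaussianInt where
  toFun p := ⟨p.1, p.2⟩
  invFun z := (z.re, z.im)
  left_inv p := rfl
  right_inv z := by ext <;> rfl
  map_add' a b := by ext <;> rfl

lemma e2_ell (p : ℤ × ℤ) : e2 (ell p) = sqrtd * e2 p := by
  ext <;> simp [e2, ell, Zsqrtd.re_mul, Zsqrtd.im_mul]

lemma ell_e2_symm (z : GaussianInt) : ell (e2.symm z) = e2.symm (sqrtd * z) := by
  apply e2.injective
  rw [e2_ell, e2.apply_symm_apply, e2.apply_symm_apply]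

lemma sqrtd_mul_sqrtd : (sqrtd : GaussianInt) * sqrtd = -1 := by
  ext <;> simp [Zsqrtd.re_mul, Zsqrtd.im_mul]

/-- `i` as a unit of `ℤ[i]`. -/
def iUnit : GaussianIntˣ :=
  ⟨sqrtd, -sqrtd, by rw [mul_neg, sqrtd_mul_sqrtd]; ring,
    by rw [neg_mul, sqrtd_mul_sqrtd]; ring⟩

lemma unit_cases (u : GaussianInt) (h : u.norm = 1) :
    u = 1 ∨ u = -1 ∨ u = sqrtd ∨ u = -sqrtd := by
  have h2 : u.re * u.re + u.im * u.im = 1 := by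
    have h' : u.re * u.re - (-1) * u.im * u.im = 1 := by rw [← Zsqrtd.norm_def]; exact h
    linarith
  have hre : -1 ≤ u.re ∧ u.re ≤ 1 := by
    constructor <;> nlinarith [mul_self_nonneg u.im, mul_self_nonneg (u.re - 1),
      mul_self_nonneg (u.re + 1)]
  have him : -1 ≤ u.im ∧ u.im ≤ 1 := by
    constructor <;> nlinarith [mul_self_nonneg u.re, mul_self_nonneg (u.im - 1),
      mul_self_nonneg (u.im + 1)]
  obtain ⟨h3, h4⟩ := hre; obtain ⟨h5, h6⟩ := him
  simp only [Zsqrtd.ext_iff]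
  interval_cases hre : u.re <;> interval_cases him : u.im <;> simp_all <;> omega

/-- The subgroup of `ℤ × ℤ` corresponding to an ideal of `ℤ[i]`. -/
def HOf (I : Ideal GaussianInt) : AddSubgroup (ℤ × ℤ) :=
  I.toAddSubgroup.map e2.symm.toAddMonoidHom

lemma mem_HOf {I : Ideal GaussianInt} {p : ℤ × ℤ} : p ∈ HOf I ↔ e2 p ∈ I := by
  simp only [HOf, AddSubgroup.mem_map]
  constructor
  · rintro ⟨z, hz, rfl⟩
    simpa using hz
  · intro h
    exact ⟨e2 p, h, by simp⟩

lemma HOf_index (I : Ideal GaussianInt) : (HOf I).index = I.toAddSubgroup.index := by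
  refine AddSubgroup.index_map_eq _ e2.symm.surjective ?_
  intro x hx
  have : e2.symm x = 0 := hx
  have : x = 0 := by simpa using congrArg e2 this
  simp [this]

lemma HOf_ell (I : Ideal GaussianInt) : (HOf I).map ell = HOf I := by
  ext p
  simp only [AddSubgroup.mem_map]
  constructor
  · rintro ⟨q, hq, rfl⟩
    rw [mem_HOf] at hq ⊢
    rw [e2_ell]
    exact Ideal.mul_mem_left _ _ hq
  · intro hp
    rw [mem_HOf] at hp
    refine ⟨e2.symm (-sqrtd * e2 p), ?_, ?_⟩
    · rw [mem_HOf]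
      simpa using Ideal.mul_mem_left _ (-sqrtd) hp
    · rw [ell_e2_symm]
      have : sqrtd * (-sqrtd * e2 p) = e2 p := by
        rw [← mul_assoc, mul_neg, sqrtd_mul_sqrtd]; ring_nf
      rw [this]; simp
  
lemma HOf_injective : Function.Injective HOf := by
  intro I J h
  have : I.toAddSubgroup = J.toAddSubgroup := by
    ext z
    have := congrArg (fun S => e2.symm z ∈ S) h
    simpa [mem_HOf] using this
  ext z
  exact SetLike.ext_iff.mp this z

/-- An `ℓ`-invariant subgroup gives an ideal of `ℤ[i]`. -/
def idealOf (H : AddSubgroup (ℤ × ℤ)) (hH : H.map ell = H) : Ideal GaussianInt where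
  carrier := {z | e2.symm z ∈ H}
  zero_mem' := by simp [AddSubgroup.zero_mem]
  add_mem' := by
    intro a b ha hb
    simp only [Set.mem_setOf_eq, map_add] at *
    exact H.add_mem ha hb
  smul_mem' := by
    intro c x hx
    simp only [Set.mem_setOf_eq] at *
    have hix : e2.symm (sqrtd * x) ∈ H := by
      rw [← ell_e2_symm, ← hH]
      exact AddSubgroup.mem_map_of_mem _ hx
    have hdecomp : c • x = c.re • x + c.im • (sqrtd * x) := by
      have h1 : (c.re : GaussianInt) * x + (c.im : GaussianInt) * (sqrtd * x) = c * x := by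
        rw [← mul_assoc]
        congr 1
        · ext <;> simp [Zsqrtd.re_mul, Zsqrtd.im_mul]
      rw [smul_eq_mul, ← h1, zsmul_eq_mul, zsmul_eq_mul] <;> simp
    rw [hdecomp, map_add, map_zsmul, map_zsmul]
    exact H.add_mem (H.zsmul_mem hx _) (H.zsmul_mem hix _)
  
lemma HOf_idealOf (H : AddSubgroup (ℤ × ℤ)) (hH : H.map ell = H) :
    HOf (idealOf H hH) = H := by
  ext p
  rw [mem_HOf]
  show e2.symm (e2 p) ∈ H ↔ p ∈ H
  rw [e2.symm_apply_apply]

lemma exists_assoc (z : GaussianInt) (hz : z ≠ 0) :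
    ∃ w : GaussianInt, Associated z w ∧ 0 < w.re ∧ 0 ≤ w.im := by
  have hz' : z.re ≠ 0 ∨ z.im ≠ 0 := by
    by_contra h
    push_neg at h
    exact hz (Zsqrtd.ext h.1 h.2)
  have hmul : ∀ u : GaussianIntˣ, Associated z ((u : GaussianInt) * z) :=
    fun u => ⟨u, mul_comm z u⟩
  by_cases h1 : 0 < z.re ∧ 0 ≤ z.im
  · exact ⟨z, Associated.rfl, h1.1, h1.2⟩
  by_cases h2 : z.re < 0 ∧ z.im ≤ 0
  · refine ⟨(-1 : GaussianInt) * z, hmul (-1), ?_, ?_⟩ <;>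
      simp [Zsqrtd.re_mul, Zsqrtd.im_mul] <;> omega
  by_cases h3 : 0 < -z.im ∧ 0 ≤ z.re
  · refine ⟨(iUnit : GaussianInt) * z, hmul iUnit, ?_, ?_⟩ <;>
      simp [iUnit, Zsqrtd.re_mul, Zsqrtd.im_mul] <;> omega
  · refine ⟨((-iUnit : GaussianIntˣ) : GaussianInt) * z, hmul (-iUnit), ?_, ?_⟩ <;>
      simp [iUnit, Zsqrtd.re_mul, Zsqrtd.im_mul] <;> omega

end EllAux

/-- The number of `ℓ`-invariant subgroups of index `n` in `ℤ²` equals `τ(n)`. -/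
theorem card_ell_invariant_subgroups (n : ℕ) (hn : 0 < n) :
    Nat.card {H : AddSubgroup (ℤ × ℤ) // H.index = n ∧ H.map ell = H} = tauFn n := by
  classical
  open EllAux in
  have hF : ∀ z : GaussianInt, z.norm = (n : ℤ) → (HOf (Ideal.span {z})).index = n := by
    intro z hz
    rw [HOf_index, index_span, hz]
    simp
  let C := {z : GaussianInt // 0 < z.re ∧ 0 ≤ z.im ∧ z.norm = (n : ℤ)}
  let F : C → {H : AddSubgroup (ℤ × ℤ) // H.index = n ∧ H.map ell = H} :=
    fun z => ⟨HOf (Ideal.span {z.1}), hF z.1 z.2.2.2, HOf_ell _⟩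
  have hFinj : Function.Injective F := by
    intro z w h
    have hspan : Ideal.span {z.1} = Ideal.span {w.1} :=
      HOf_injective (congrArg Subtype.val h)
    obtain ⟨u, hu⟩ := Ideal.span_singleton_eq_span_singleton.mp hspan
    have hu1 : (u : GaussianInt).norm = 1 :=
      (Zsqrtd.norm_eq_one_iff' (by norm_num : (-1 : ℤ) ≤ 0) _).mpr u.isUnit
    obtain ⟨hz1, hz2, hz3⟩ := z.2
    obtain ⟨hw1, hw2, hw3⟩ := w.2
    apply Subtype.ext
    rcases unit_cases _ hu1 with hc | hc | hc | hc
    · rw [hc, mul_one] at hu; exact hu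
    · exfalso
      rw [hc] at hu
      have : w.1.re = -z.1.re := by rw [← hu]; simp [Zsqrtd.re_mul]
      omega
    · exfalso
      rw [hc] at hu
      have h1 : w.1.re = -z.1.im := by rw [← hu]; simp [Zsqrtd.re_mul]
      omega
    · exfalso
      rw [hc] at hu
      have h1 : w.1.im = -z.1.re := by rw [← hu]; simp [Zsqrtd.im_mul]
      omega
  have hFsurj : Function.Surjective F := by
    rintro ⟨H, hidx, hell⟩
    set I := idealOf H hell with hI
    have hHI : HOf I = H := HOf_idealOf H hell
    have hIbot : I ≠ ⊥ := by
      intro hbot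
      have : H = ⊥ := by
        rw [← hHI, hbot]
        ext p
        simp [mem_HOf]
      rw [this] at hidx
      rw [AddSubgroup.index_bot, Nat.card_eq_zero_of_infinite] at hidx
      omega
    obtain ⟨z₀, hz₀⟩ : ∃ z₀ : GaussianInt, I = Ideal.span {z₀} :=
      (IsPrincipalIdealRing.principal I).principal
    have hz₀ne : z₀ ≠ 0 := by
      intro h0
      rw [h0] at hz₀
      exact hIbot (by rw [hz₀]; simp)
    obtain ⟨v, hassoc, hv1, hv2⟩ := exists_assoc z₀ hz₀ne
    have hspan : Ideal.span {v} = I := by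
      rw [hz₀]
      exact (Ideal.span_singleton_eq_span_singleton.mpr hassoc).symm
    have hHv : HOf (Ideal.span {v}) = H := by rw [hspan, hHI]
    have hvnorm : v.norm = (n : ℤ) := by
      have h1 : (HOf (Ideal.span {v})).index = n := by rw [hHv]; exact hidx
      rw [HOf_index, index_span] at h1
      have h2 : 0 ≤ v.norm := Zsqrtd.norm_nonneg (by norm_num) v
      omega
    exact ⟨⟨v, hv1, hv2, hvnorm⟩, Subtype.ext hHv⟩
  rw [← Nat.card_congr (Equiv.ofBijective F ⟨hFinj, hFsurj⟩), tauFn]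
  apply Nat.card_congr
  refine ⟨fun z => ⟨(z.1.re, z.1.im), z.2.1, z.2.2.1, ?_⟩,
    fun p => ⟨⟨p.1.1, p.1.2⟩, p.2.1, p.2.2.1, ?_⟩, fun z => rfl, fun p => rfl⟩
  · have h3 := z.2.2.2
    rw [Zsqrtd.norm_def] at h3
    ring_nf at h3 ⊢
    linarith
  · have h3 := p.2.2.2
    rw [Zsqrtd.norm_def]
    ring_nf at h3 ⊢
    linarith
end

section
/- Let ℓ : Z^2 → Z^2 be the automorphism (x,y) ↦ (−y,x). For each ℓ-invariant subgroup H of index n in Z^2, the number of cosets ν ∈ Z^2/H fixed by the induced action of ℓ is 1 if n is odd and 2 if n is even. -/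
/-- The parity homomorphism `(x, y) ↦ x + y mod 2`. -/
def sigma2 : (ℤ × ℤ) →+ ZMod 2 :=
  AddMonoidHom.mk' (fun p => ((p.1 + p.2 : ℤ) : ZMod 2))
    (by intro a b; simp only [Prod.fst_add, Prod.snd_add]; push_cast; ring)

lemma sigma2_surjective : Function.Surjective sigma2 := by
  intro c
  fin_cases c
  · exact ⟨(0, 0), by rfl⟩
  · exact ⟨(1, 0), by rfl⟩

lemma sigma2_ker_index : sigma2.ker.index = 2 := by
  rw [AddSubgroup.index_ker, AddMonoidHom.range_eq_top.mpr sigma2_surjective]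
  rw [Nat.card_congr AddSubgroup.topEquiv.toEquiv]
  simp [Nat.card_eq_fintype_card]

/-- The map `v ↦ ℓ v - v`. -/
def phi : (ℤ × ℤ) →+ ℤ × ℤ :=
  AddMonoidHom.mk' (fun p => (-p.2 - p.1, p.1 - p.2))
    (by intro a b; refine Prod.ext ?_ ?_ <;> simp <;> ring)

lemma phi_eq (p : ℤ × ℤ) : phi p = ell p - p := rfl

lemma range_phi : phi.range = sigma2.ker := by
  ext p
  constructor
  · rintro ⟨⟨x, y⟩, rfl⟩
    show (((-y - x : ℤ) + (x - y) : ℤ) : ZMod 2) = 0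
    rw [show (-y - x : ℤ) + (x - y) = 2 * (-y) by ring]
    push_cast
    rw [show (2 : ZMod 2) = 0 by decide, zero_mul]
  · intro h
    obtain ⟨a, b⟩ := p
    have h' : ((a + b : ℤ) : ZMod 2) = 0 := h
    rw [ZMod.intCast_zmod_eq_zero_iff_dvd] at h'
    obtain ⟨k, hk⟩ := h'
    refine ⟨(k - a, -k), ?_⟩
    show ((-(-k) - (k - a) : ℤ), ((k - a) - (-k) : ℤ)) = (a, b)
    refine Prod.ext ?_ ?_ <;> simp <;> omega

/-- For an `ℓ`-invariant subgroup `H ≤ ℤ²` of index `n`, the number of cosets `ν ∈ ℤ²/H`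
fixed by the induced action of `ℓ` is `1` if `n` is odd and `2` if `n` is even. -/
theorem card_fixed_cosets (n : ℕ) (hn : 0 < n) (H : AddSubgroup (ℤ × ℤ))
    (hidx : H.index = n) (hinv : H.map ell = H) :
    Nat.card {ν : (ℤ × ℤ) ⧸ H //
        QuotientAddGroup.map H H ell
          (fun g hg => AddSubgroup.mem_comap.mpr
            (hinv ▸ AddSubgroup.mem_map_of_mem ell hg)) ν = ν} =
      if Odd n then 1 else 2 := by
  classical
  have hellH : ∀ g ∈ H, ell g ∈ H := fun g hg => hinv ▸ AddSubgroup.mem_map_of_mem ell hg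
  have hle : H ≤ H.comap ell := fun g hg => AddSubgroup.mem_comap.mpr (hellH g hg)
  set G := (ℤ × ℤ) ⧸ H with hG
  let L : G →+ G := QuotientAddGroup.map H H ell hle
  show Nat.card {ν : G // L ν = ν} = if Odd n then 1 else 2
  have hGcard : Nat.card G = n := by rw [← hidx, AddSubgroup.index]
  have : Finite G := Nat.finite_of_card_ne_zero (by omega)
  have L_mk : ∀ v : ℤ × ℤ, L (QuotientAddGroup.mk v) = QuotientAddGroup.mk (ell v) :=
    fun v => QuotientAddGroup.map_mk H H ell hle v
  -- L ∘ L = neg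
  have LL : ∀ ν : G, L (L ν) = -ν := by
    intro ν
    induction ν using QuotientAddGroup.induction_on with
    | H v =>
      have hvv : ell (ell v) = -v := by
        refine Prod.ext ?_ ?_ <;> simp [ell]
      rw [L_mk, L_mk, hvv, QuotientAddGroup.mk_neg]
  by_cases hodd : Odd n
  · -- odd case: only the zero coset is fixed
    rw [if_pos hodd]
    have huniq : ∀ ν : G, L ν = ν → ν = 0 := by
      intro ν hν
      have h2 : ν + ν = 0 := by
        have := LL ν
        rw [hν, hν] at this
        exact eq_neg_iff_add_eq_zero.mp this
      obtain ⟨k, hk⟩ := hodd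
      have hns : n • ν = 0 := by rw [← hGcard]; exact card_nsmul_eq_zero'
      have h2k : (2 * k) • ν = 0 := by
        rw [two_mul, add_nsmul, ← nsmul_add, h2, smul_zero]
      rw [hk, add_nsmul, h2k, zero_add, one_nsmul] at hns
      exact hns
    haveI : Unique {ν : G // L ν = ν} :=
      { default := ⟨0, map_zero L⟩
        uniq := fun ⟨ν, hν⟩ => Subtype.ext (huniq ν hν) }
    exact Nat.card_unique
  · -- even case
    rw [if_neg hodd]
    have heven : 2 ∣ n := by
      rcases Nat.even_or_odd n with h | h
      · exact h.two_dvd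
      · exact absurd h hodd
    -- H is contained in the parity kernel
    have hHS : H ≤ sigma2.ker := by
      by_contra hcon
      rw [SetLike.not_le_iff_exists] at hcon
      obtain ⟨⟨a, b⟩, habH, habS⟩ := hcon
      have hodd_ab : ¬ (2 : ℤ) ∣ (a + b) := by
        intro hd
        exact habS (AddMonoidHom.mem_ker.mpr ((ZMod.intCast_zmod_eq_zero_iff_dvd _ 2).mpr hd))
      have hba : (-b, a) ∈ H := hellH (a, b) habH
      -- doubling is surjective on G
      have hsurj : Function.Surjective (fun μ : G => μ + μ) := by
        intro ν
        induction ν using QuotientAddGroup.induction_on with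
        | H v =>
          obtain ⟨x, y⟩ := v
          rcases Int.even_or_odd a with ⟨a', ha⟩ | ⟨a', ha⟩
          · -- a even, b odd
            obtain ⟨b', hb⟩ : Odd b := Int.odd_iff.mpr (by omega)
            have hc : ((y * a - x * b, y * b + x * a) : ℤ × ℤ) ∈ H := by
              have h1 := H.add_mem (H.zsmul_mem habH y) (H.zsmul_mem hba x)
              have : y • ((a, b) : ℤ × ℤ) + x • ((-b, a) : ℤ × ℤ)
                  = (y * a - x * b, y * b + x * a) := by
                simp [Prod.ext_iff, smul_eq_mul]; ring
              rwa [this] at h1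
            refine ⟨QuotientAddGroup.mk ((x + x * b' - y * a', -(y * b') - x * a') : ℤ × ℤ), ?_⟩
            show QuotientAddGroup.mk _ + QuotientAddGroup.mk _ = QuotientAddGroup.mk _
            rw [← QuotientAddGroup.mk_add, QuotientAddGroup.eq]
            have : -(((x + x * b' - y * a', -(y * b') - x * a') : ℤ × ℤ)
                + (x + x * b' - y * a', -(y * b') - x * a')) + (x, y)
                = (y * a - x * b, y * b + x * a) := by
              simp only [Prod.ext_iff, Prod.fst_add, Prod.snd_add, Prod.fst_neg, Prod.snd_neg]
              constructor <;> (rw [ha, hb]; ring)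
            rw [this]
            exact hc
          · -- a odd, b even
            obtain ⟨b', hb⟩ : Even b := Int.even_iff.mpr (by omega)
            have hc : ((x * a - y * b, x * b + y * a) : ℤ × ℤ) ∈ H := by
              have h1 := H.add_mem (H.zsmul_mem habH x) (H.zsmul_mem hba y)
              have : x • ((a, b) : ℤ × ℤ) + y • ((-b, a) : ℤ × ℤ)
                  = (x * a - y * b, x * b + y * a) := by
                simp [Prod.ext_iff, smul_eq_mul]; ring
              rwa [this] at h1
            refine ⟨QuotientAddGroup.mk ((y * b' - x * a', -(x * b') - y * a') : ℤ × ℤ), ?_⟩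
            show QuotientAddGroup.mk _ + QuotientAddGroup.mk _ = QuotientAddGroup.mk _
            rw [← QuotientAddGroup.mk_add, QuotientAddGroup.eq]
            have : -(((y * b' - x * a', -(x * b') - y * a') : ℤ × ℤ)
                + (y * b' - x * a', -(x * b') - y * a')) + (x, y)
                = (x * a - y * b, x * b + y * a) := by
              simp only [Prod.ext_iff, Prod.fst_add, Prod.snd_add, Prod.fst_neg, Prod.snd_neg]
              constructor <;> (rw [ha, hb]; ring)
            rw [this]
            exact hc
      haveI : Fintype G := Fintype.ofFinite G
      obtain ⟨ν, hν⟩ := exists_prime_addOrderOf_dvd_card (G := G) 2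
        (by rw [Fintype.card_eq_nat_card, hGcard]; exact heven)
      have hν0 : ν ≠ 0 := by
        intro h; rw [h, addOrderOf_zero] at hν; omega
      have h2ν : ν + ν = 0 := by
        have := addOrderOf_nsmul_eq_zero ν
        rw [hν, two_nsmul] at this
        exact this
      have hinj : Function.Injective (fun μ : G => μ + μ) :=
        (Finite.injective_iff_surjective).mpr hsurj
      exact hν0 (hinj (show ν + ν = 0 + 0 by rw [h2ν, add_zero]))
    -- now count via the homomorphism ψ = L - id
    let ψ : G →+ G := L - AddMonoidHom.id G
    have hψ : ∀ ν : G, ψ ν = L ν - ν := fun ν => rfl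
    have hfix : Nat.card {ν : G // L ν = ν} = Nat.card ψ.ker := by
      apply Nat.card_congr
      exact Equiv.subtypeEquivRight (fun ν => by
        simp only [AddMonoidHom.mem_ker, hψ, sub_eq_zero])
    have hrange : ψ.range = sigma2.ker.map (QuotientAddGroup.mk' H) := by
      ext ν
      constructor
      · rintro ⟨μ, rfl⟩
        induction μ using QuotientAddGroup.induction_on with
        | H v =>
          refine ⟨phi v, by rw [← range_phi]; exact ⟨v, rfl⟩, ?_⟩
          rw [phi_eq]
          show QuotientAddGroup.mk (ell v - v) = ψ (QuotientAddGroup.mk v)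
          rw [hψ, L_mk, QuotientAddGroup.mk_sub]
      · rintro ⟨s, hs, rfl⟩
        rw [← range_phi] at hs
        obtain ⟨v, rfl⟩ := hs
        refine ⟨QuotientAddGroup.mk v, ?_⟩
        rw [hψ, L_mk]
        show QuotientAddGroup.mk (ell v) - QuotientAddGroup.mk v
            = QuotientAddGroup.mk (ell v - v)
        rw [QuotientAddGroup.mk_sub]
    have hrange_index : ψ.range.index = 2 := by
      rw [hrange, AddSubgroup.index_map, QuotientAddGroup.ker_mk',
        sup_eq_left.mpr hHS, sigma2_ker_index,
        AddMonoidHom.range_eq_top.mpr (QuotientAddGroup.mk'_surjective H),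
        AddSubgroup.index_top, mul_one]
    -- card ker * card range = card G = card range * range.index
    have h1 : Nat.card G = Nat.card ψ.range * Nat.card ψ.ker := by
      rw [AddSubgroup.card_eq_card_quotient_mul_card_addSubgroup ψ.ker]
      congr 1
      exact Nat.card_congr (QuotientAddGroup.quotientKerEquivRange ψ).toEquiv
    have h2 : Nat.card ψ.range * ψ.range.index = Nat.card G :=
      AddSubgroup.card_mul_index ψ.range
    have hpos : 0 < Nat.card ψ.range := Nat.card_pos
    have : Nat.card ψ.range * Nat.card ψ.ker = Nat.card ψ.range * ψ.range.index := by
      rw [← h1, h2]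
    have := Nat.eq_of_mul_eq_mul_left hpos this
    rw [hfix, this, hrange_index]
end

section
/- Let R(n) be the sum, over all subgroups H of index n in Z^2 invariant under ℓ : (x,y) ↦ (−y,x), of the number of cosets ν ∈ Z^2/H with ℓ(ν) = ν. Then R(n) = τ(n) + τ(n/2), where τ(n/2) = 0 if n is odd. -/
open GaussianInt

namespace SumFixed

/-! ### Basic setup: basis, norms, cardinalities of quotients -/

noncomputable def gBasis : Module.Basis (Fin 2) ℤ GaussianInt :=
  Module.Basis.ofEquivFun
    { toFun := fun z => ![z.re, z.im]
      invFun := fun v => ⟨v 0, v 1⟩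
      left_inv := fun z => by simp
      right_inv := fun v => by funext i; fin_cases i <;> simp
      map_add' := fun a b => by funext i; fin_cases i <;> simp
      map_smul' := fun c z => by
        funext i
        have : (c • z) = (c : GaussianInt) * z := zsmul_eq_mul z c
        fin_cases i <;> simp [this, Zsqrtd.re_smul, Zsqrtd.im_smul] }

instance : Module.Free ℤ GaussianInt := Module.Free.of_basis gBasis
instance : Module.Finite ℤ GaussianInt := Module.Finite.of_basis gBasis

theorem algebraNorm_eq (z : GaussianInt) : Algebra.norm ℤ z = z.norm := by
  rw [Algebra.norm_eq_matrix_det gBasis, Matrix.det_fin_two]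
  simp [Algebra.leftMulMatrix_eq_repr_mul, gBasis, Zsqrtd.norm, Zsqrtd.re_mul, Zsqrtd.im_mul]

theorem card_quot_eq_absNorm (I : Ideal GaussianInt) :
    Nat.card (GaussianInt ⧸ I) = Ideal.absNorm I := by
  rw [Ideal.absNorm_apply, Submodule.cardQuot_apply]

theorem card_quot_span (z : GaussianInt) :
    Nat.card (GaussianInt ⧸ Ideal.span {z}) = z.norm.natAbs := by
  rw [card_quot_eq_absNorm, Ideal.absNorm_span_singleton, algebraNorm_eq]

/-- `ω = i` in the Gaussian integers. -/
def ω : GaussianInt := ⟨0, 1⟩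

theorem ω_mul (z : GaussianInt) : ω * z = ⟨-z.im, z.re⟩ := by
  ext <;> simp [ω, Zsqrtd.re_mul, Zsqrtd.im_mul]

theorem mul_ω (z : GaussianInt) : z * ω = ⟨-z.im, z.re⟩ := by rw [mul_comm, ω_mul]

theorem mul_neg_ω (z : GaussianInt) : z * (-ω) = ⟨z.im, -z.re⟩ := by
  rw [mul_neg, mul_ω]; ext <;> simp

theorem ω_pow_four (z : GaussianInt) : ω * (ω * (ω * (ω * z))) = z := by
  have h : ω * ω = -1 := by ext <;> simp [ω, Zsqrtd.re_mul, Zsqrtd.im_mul]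
  calc ω * (ω * (ω * (ω * z))) = (ω * ω) * ((ω * ω) * z) := by ring
  _ = z := by rw [h]; ring

/-- The additive equivalence between `ℤ × ℤ` and the Gaussian integers. -/
def E : (ℤ × ℤ) ≃+ GaussianInt where
  toFun p := ⟨p.1, p.2⟩
  invFun z := (z.re, z.im)
  left_inv _ := rfl
  right_inv _ := rfl
  map_add' _ _ := rfl

theorem E_ell (p : ℤ × ℤ) : E (ell p) = ω * E p := by
  rw [ω_mul]; rfl

/-! ### Units and quadrant representatives -/

def uω : (GaussianInt)ˣ := ⟨ω, -ω, by decide, by decide⟩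

theorem sq_helper {a b : ℤ} (h : a * a + b * b = 1) :
    (a = 1 ∧ b = 0) ∨ (a = -1 ∧ b = 0) ∨ (a = 0 ∧ b = 1) ∨ (a = 0 ∧ b = -1) := by
  have h2 : a * a ≤ 1 := by nlinarith [mul_self_nonneg b]
  have h3 : -1 ≤ a := by nlinarith
  have h4 : a ≤ 1 := by nlinarith
  interval_cases a
  · have : b = 0 := by nlinarith
    tauto
  · have : b * b = 1 := by linarith
    rcases mul_self_eq_one_iff.mp this with rfl | rfl <;> tauto
  · have : b = 0 := by nlinarith
    tauto

theorem unit_cases {u : GaussianInt} (h : IsUnit u) :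
    u = 1 ∨ u = -1 ∨ u = ω ∨ u = -ω := by
  have hn : u.norm.natAbs = 1 := Zsqrtd.norm_eq_one_iff.mpr h
  have hnn : (0 : ℤ) ≤ u.norm := Zsqrtd.norm_nonneg (by norm_num) u
  have h1 : u.norm = 1 := by omega
  have h2 : u.re * u.re + u.im * u.im = 1 := by
    simp [Zsqrtd.norm] at h1; linarith
  rcases sq_helper h2 with ⟨h1, h2⟩ | ⟨h1, h2⟩ | ⟨h1, h2⟩ | ⟨h1, h2⟩
  · left; ext <;> simp [h1, h2]
  · right; left; ext <;> simp [h1, h2]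
  · right; right; left; ext <;> simp [ω, h1, h2]
  · right; right; right; ext <;> simp [ω, h1, h2]

theorem quadrant_unique {z w : GaussianInt} (hz : 0 < z.re ∧ 0 ≤ z.im)
    (hw : 0 < w.re ∧ 0 ≤ w.im) (h : Associated z w) : z = w := by
  obtain ⟨u, hu⟩ := h
  rcases unit_cases u.isUnit with h1 | h1 | h1 | h1 <;> rw [h1] at hu
  · rw [mul_one] at hu; exact hu
  · exfalso
    have : w.re = -z.re := by rw [← hu]; simp
    omega
  · exfalso
    have hre : w.re = -z.im := by rw [← hu, mul_ω]
    have him : w.im = z.re := by rw [← hu, mul_ω]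
    omega
  · exfalso
    have hre : w.re = z.im := by rw [← hu, mul_neg_ω]
    have him : w.im = -z.re := by rw [← hu, mul_neg_ω]
    omega

theorem quadrant_exists {z : GaussianInt} (hz : z ≠ 0) :
    ∃ w, Associated z w ∧ 0 < w.re ∧ 0 ≤ w.im := by
  have hz' : ¬(z.re = 0 ∧ z.im = 0) := by
    intro ⟨h1, h2⟩; exact hz (by ext <;> simp [h1, h2])
  by_cases h1 : 0 < z.re ∧ 0 ≤ z.im
  · exact ⟨z, Associated.refl z, h1.1, h1.2⟩
  by_cases h2 : 0 < z.im ∧ z.re ≤ 0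
  · exact ⟨z * (-uω), ⟨-uω, rfl⟩,
      by rw [show ((uω : GaussianInt)) = ω from rfl, mul_neg_ω]; dsimp; omega,
      by rw [show ((uω : GaussianInt)) = ω from rfl, mul_neg_ω]; dsimp; omega⟩
  by_cases h3 : z.re < 0 ∧ z.im ≤ 0
  · exact ⟨z * (-1), ⟨-1, rfl⟩, by simp; omega, by simp; omega⟩
  · exact ⟨z * uω, ⟨uω, rfl⟩, by rw [show (uω : GaussianInt) = ω from rfl, mul_ω]; dsimp; omega,
      by rw [show (uω : GaussianInt) = ω from rfl, mul_ω]; dsimp; omega⟩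

/-! ### Counting ideals of a given norm -/

theorem card_quot_eq (z : GaussianInt) {n : ℕ}
    (h : Nat.card (GaussianInt ⧸ Ideal.span {z}) = n) : (z.norm : ℤ) = n := by
  rw [card_quot_span] at h
  have := Zsqrtd.norm_nonneg (by norm_num : (-1 : ℤ) ≤ 0) z
  omega

theorem norm_mk (s t : ℤ) : Zsqrtd.norm (⟨s, t⟩ : GaussianInt) = s ^ 2 + t ^ 2 := by
  simp [Zsqrtd.norm]; ring

theorem tauFn_eq_card_ideals (n : ℕ) (hn : 0 < n) :
    tauFn n = Nat.card {I : Ideal GaussianInt // Nat.card (GaussianInt ⧸ I) = n} := by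
  apply Nat.card_congr
  refine Equiv.ofBijective
    (fun st => ⟨Ideal.span {(⟨st.1.1, st.1.2⟩ : GaussianInt)}, ?_⟩) ⟨?_, ?_⟩
  · obtain ⟨⟨s, t⟩, hs, ht, hst⟩ := st
    rw [card_quot_span, norm_mk]
    simp only at hst ⊢
    omega
  · rintro ⟨⟨s, t⟩, hs1, hs2, hs3⟩ ⟨⟨s', t'⟩, ht1, ht2, ht3⟩ h
    simp only [Subtype.mk.injEq, Ideal.span_singleton_eq_span_singleton] at h
    have := quadrant_unique (z := ⟨s, t⟩) (w := ⟨s', t'⟩) ⟨hs1, hs2⟩ ⟨ht1, ht2⟩ h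
    simp only [Zsqrtd.ext_iff] at this
    simp [Prod.ext_iff, this.1, this.2]
  · rintro ⟨I, hI⟩
    set ζ := Submodule.IsPrincipal.generator I with hζdef
    have hspan : Ideal.span {ζ} = I := Submodule.IsPrincipal.span_singleton_generator I
    have hζn : (ζ.norm : ℤ) = n := card_quot_eq ζ (by rw [hspan, hI])
    have hζ0 : ζ ≠ 0 := by
      intro h0
      rw [h0, Zsqrtd.norm_zero] at hζn
      omega
    obtain ⟨w, hassoc, hw1, hw2⟩ := quadrant_exists hζ0
    have hwn : (w.norm : ℤ) = n := by
      rw [← Zsqrtd.norm_eq_of_associated (by norm_num) hassoc]; exact hζn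
    refine ⟨⟨(w.re, w.im), hw1, hw2, ?_⟩, ?_⟩
    · have : Zsqrtd.norm w = w.re ^ 2 + w.im ^ 2 := by simp [Zsqrtd.norm]; ring
      rw [this] at hwn
      exact_mod_cast hwn
    · apply Subtype.ext
      simp only
      have hw : (⟨w.re, w.im⟩ : GaussianInt) = w := rfl
      rw [hw, ← hspan, Ideal.span_singleton_eq_span_singleton]
      exact hassoc.symm

/-! ### Divisibility by `ω - 1` and parity -/

theorem dvd_of_even {ζ : GaussianInt} {n : ℕ} (hζ : (ζ.norm : ℤ) = n) (he : 2 ∣ n) :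
    ∃ γ, ζ = (ω - 1) * γ := by
  set s := ζ.re; set t := ζ.im
  have hst : s * s + t * t = (n : ℤ) := by
    simp [Zsqrtd.norm] at hζ; linarith
  have e1 : (2 : ℤ) ∣ s * s - s := by
    rcases Int.even_mul_succ_self (s - 1) with ⟨k, hk⟩
    exact ⟨k, by nlinarith⟩
  have e2 : (2 : ℤ) ∣ t * t - t := by
    rcases Int.even_mul_succ_self (t - 1) with ⟨k, hk⟩
    exact ⟨k, by nlinarith⟩
  have hn2 : (2 : ℤ) ∣ (n : ℤ) := by exact_mod_cast he
  have hpar : (2 : ℤ) ∣ s + t := by omega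
  refine ⟨⟨(t - s) / 2, (-s - t) / 2⟩, ?_⟩
  have hsub : (ω - 1 : GaussianInt) = ⟨-1, 1⟩ := by ext <;> simp [ω]
  rw [hsub]
  ext <;> simp [Zsqrtd.re_mul, Zsqrtd.im_mul] <;> omega

theorem norm_omega_sub_one : (ω - 1 : GaussianInt).norm = 2 := by decide

theorem omega_sub_one_ne_zero : (ω - 1 : GaussianInt) ≠ 0 := by decide

theorem prime_omega_sub_one : Prime (ω - 1 : GaussianInt) := by
  rw [← UniqueFactorizationMonoid.irreducible_iff_prime]
  constructor
  · rw [← Zsqrtd.norm_eq_one_iff, norm_omega_sub_one]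
    norm_num
  · intro a b hab
    have h2 : a.norm.natAbs * b.norm.natAbs = 2 := by
      rw [← Int.natAbs_mul, ← Zsqrtd.norm_mul, ← hab, norm_omega_sub_one]
      rfl
    rcases (Nat.prime_two.eq_one_or_self_of_dvd a.norm.natAbs ⟨_, h2.symm⟩) with h | h
    · exact Or.inl (Zsqrtd.norm_eq_one_iff.mp h)
    · right
      rw [h] at h2
      exact Zsqrtd.norm_eq_one_iff.mp (by omega)

theorem not_dvd_of_odd {ζ : GaussianInt} {n : ℕ} (hζ : (ζ.norm : ℤ) = n) (ho : ¬ 2 ∣ n) :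
    ¬ (ω - 1) ∣ ζ := by
  rintro ⟨γ, hγ⟩
  apply ho
  have h1 : ζ.norm = 2 * γ.norm := by rw [hγ, Zsqrtd.norm_mul, norm_omega_sub_one]
  have h2 : (2 : ℤ) ∣ (n : ℤ) := ⟨γ.norm, by rw [← hζ, h1]⟩
  exact_mod_cast h2

/-! ### Counting fixed cosets -/

/-- The fixed-coset subtype for an ideal. -/
def FixC (I : Ideal GaussianInt) : Type :=
  {ν : GaussianInt ⧸ I // Ideal.Quotient.mk I ω * ν = ν}

theorem fix_even_equiv {I : Ideal GaussianInt} {n : ℕ}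
    (hI : Nat.card (GaussianInt ⧸ I) = n) (hn : 0 < n) (he : 2 ∣ n) :
    Nonempty (FixC I ≃ GaussianInt ⧸ (Ideal.span {ω - 1} : Ideal GaussianInt)) := by
  set ζ := Submodule.IsPrincipal.generator I with hζdef
  have hspan : Ideal.span {ζ} = I := Submodule.IsPrincipal.span_singleton_generator I
  have hζn : (ζ.norm : ℤ) = n := card_quot_eq ζ (by rw [hspan, hI])
  have hζ0 : ζ ≠ 0 := by
    intro h0; rw [h0, Zsqrtd.norm_zero] at hζn; omega
  obtain ⟨γ, hγ⟩ := dvd_of_even hζn he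
  have hγ0 : γ ≠ 0 := by
    intro h0; rw [h0, mul_zero] at hγ; exact hζ0 hγ
  have hmem : ∀ x : GaussianInt, x ∈ I ↔ ζ ∣ x := by
    intro x; rw [← hspan, Ideal.mem_span_singleton]
  -- the map
  have hle : (Ideal.span {ω - 1} : Ideal GaussianInt) ≤
      Submodule.comap (LinearMap.mulLeft GaussianInt γ) I := by
    rw [Ideal.span_le, Set.singleton_subset_iff]
    show γ * (ω - 1) ∈ I
    rw [hmem]
    exact ⟨1, by rw [hγ]; ring⟩
  set φ := Submodule.mapQ (Ideal.span {ω - 1} : Ideal GaussianInt) I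
    (LinearMap.mulLeft GaussianInt γ) hle with hφ
  have hφ_mk : ∀ b : GaussianInt,
      φ (Ideal.Quotient.mk _ b) = Ideal.Quotient.mk I (γ * b) := fun b => rfl
  have key : ∀ b : GaussianInt,
      Ideal.Quotient.mk I ω * Ideal.Quotient.mk I (γ * b) = Ideal.Quotient.mk I (γ * b) := by
    intro b
    rw [← map_mul, Ideal.Quotient.mk_eq_mk_iff_sub_mem]
    rw [hmem]
    exact ⟨b, by rw [hγ]; ring⟩
  refine ⟨(Equiv.ofBijective (fun y => ⟨φ y, ?_⟩) ⟨?_, ?_⟩ : _ ≃ FixC I).symm⟩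
  · obtain ⟨b, rfl⟩ := Ideal.Quotient.mk_surjective y
    rw [hφ_mk]
    exact key b
  · intro y y' h
    obtain ⟨b, rfl⟩ := Ideal.Quotient.mk_surjective y
    obtain ⟨b', rfl⟩ := Ideal.Quotient.mk_surjective y'
    have h' : Ideal.Quotient.mk I (γ * b) = Ideal.Quotient.mk I (γ * b') := by
      have := congrArg Subtype.val h
      rwa [show (((fun y => (⟨φ y, by
          obtain ⟨b, rfl⟩ := Ideal.Quotient.mk_surjective y
          rw [hφ_mk]; exact key b⟩ : FixC I))) : _ → FixC I) = _ from rfl] at this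
    rw [Ideal.Quotient.mk_eq_mk_iff_sub_mem, hmem] at h'
    obtain ⟨c, hc⟩ := h'
    have hb : b - b' = (ω - 1) * c := by
      apply mul_left_cancel₀ hγ0
      rw [hγ] at hc
      linear_combination hc
    refine (Ideal.Quotient.eq).mpr ?_
    rw [Ideal.mem_span_singleton]
    exact ⟨c, hb⟩
  · rintro ⟨ν, hν⟩
    obtain ⟨x, rfl⟩ := Ideal.Quotient.mk_surjective ν
    rw [← map_mul, Ideal.Quotient.mk_eq_mk_iff_sub_mem, hmem] at hν
    obtain ⟨c, hc⟩ := hν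
    have hx : x = γ * c := by
      apply mul_left_cancel₀ omega_sub_one_ne_zero
      rw [hγ] at hc
      linear_combination hc
    exact ⟨Ideal.Quotient.mk _ c, by apply Subtype.ext; simp only [hφ_mk]; rw [hx]⟩

theorem card_fix_even {I : Ideal GaussianInt} {n : ℕ}
    (hI : Nat.card (GaussianInt ⧸ I) = n) (hn : 0 < n) (he : 2 ∣ n) :
    Nat.card (FixC I) = 2 := by
  obtain ⟨e⟩ := fix_even_equiv hI hn he
  rw [Nat.card_congr e, card_quot_span, norm_omega_sub_one]
  rfl

theorem card_fix_odd {I : Ideal GaussianInt} {n : ℕ}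
    (hI : Nat.card (GaussianInt ⧸ I) = n) (hn : 0 < n) (ho : ¬ 2 ∣ n) :
    Nat.card (FixC I) = 1 := by
  set ζ := Submodule.IsPrincipal.generator I with hζdef
  have hspan : Ideal.span {ζ} = I := Submodule.IsPrincipal.span_singleton_generator I
  have hζn : (ζ.norm : ℤ) = n := card_quot_eq ζ (by rw [hspan, hI])
  have hmem : ∀ x : GaussianInt, x ∈ I ↔ ζ ∣ x := by
    intro x; rw [← hspan, Ideal.mem_span_singleton]
  have hzero : ∀ ν : FixC I, ν.1 = 0 := by
    rintro ⟨ν, hν⟩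
    obtain ⟨x, rfl⟩ := Ideal.Quotient.mk_surjective ν
    rw [← map_mul, Ideal.Quotient.mk_eq_mk_iff_sub_mem, hmem] at hν
    obtain ⟨c, hc⟩ := hν
    have hpd : (ω - 1) ∣ ζ * c := ⟨x, by linear_combination -hc⟩
    rcases prime_omega_sub_one.2.2 _ _ hpd with h | h
    · exact absurd h (not_dvd_of_odd hζn ho)
    obtain ⟨c', hc'⟩ := h
    have hx : x = ζ * c' := by
      apply mul_left_cancel₀ omega_sub_one_ne_zero
      rw [hc'] at hc
      linear_combination hc
    simp only
    rw [show (0 : GaussianInt ⧸ I) = Ideal.Quotient.mk I 0 from rfl,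
      Ideal.Quotient.mk_eq_mk_iff_sub_mem, hmem]
    exact ⟨c', by rw [hx]; ring⟩
  rw [Nat.card_eq_one_iff_unique]
  constructor
  · constructor
    intro a b
    apply Subtype.ext
    rw [hzero a, hzero b]
  · exact ⟨⟨0, by rw [mul_zero]⟩⟩


theorem card_ideals_halve (n : ℕ) (hn : 0 < n) (he : 2 ∣ n) :
    Nat.card {I : Ideal GaussianInt // Nat.card (GaussianInt ⧸ I) = n} =
    Nat.card {I : Ideal GaussianInt // Nat.card (GaussianInt ⧸ I) = n / 2} := by
  apply Nat.card_congr
  symm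
  refine Equiv.ofBijective
    (fun J => ⟨Ideal.span {ω - 1} * J.1, ?_⟩) ⟨?_, ?_⟩
  · obtain ⟨J, hJ⟩ := J
    simp only
    rw [card_quot_eq_absNorm, map_mul, ← card_quot_eq_absNorm, ← card_quot_eq_absNorm,
      card_quot_span, norm_omega_sub_one, hJ]
    show 2 * (n / 2) = n
    omega
  · rintro ⟨J, hJ⟩ ⟨J', hJ'⟩ h
    simp only [Subtype.mk.injEq] at h
    apply Subtype.ext
    have hb : (Ideal.span {ω - 1} : Ideal GaussianInt) ≠ 0 := by
      rw [Ne, Ideal.zero_eq_bot, Ideal.span_singleton_eq_bot]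
      exact omega_sub_one_ne_zero
    exact mul_left_cancel₀ hb h
  · rintro ⟨I, hI⟩
    set ζ := Submodule.IsPrincipal.generator I with hζdef
    have hspan : Ideal.span {ζ} = I := Submodule.IsPrincipal.span_singleton_generator I
    have hζn : (ζ.norm : ℤ) = n := card_quot_eq ζ (by rw [hspan, hI])
    obtain ⟨γ, hγ⟩ := dvd_of_even hζn he
    refine ⟨⟨Ideal.span {γ}, ?_⟩, ?_⟩
    · have hnγ : (2 : ℤ) * γ.norm = n := by
        rw [← hζn, hγ, Zsqrtd.norm_mul, norm_omega_sub_one]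
      have hγnn := Zsqrtd.norm_nonneg (by norm_num : (-1 : ℤ) ≤ 0) γ
      rw [card_quot_span]
      omega
    · apply Subtype.ext
      simp only
      rw [Ideal.span_singleton_mul_span_singleton, ← hγ, hspan]


end SumFixed
namespace SumFixed

theorem decomp (c : GaussianInt) : c = (c.re : GaussianInt) + (c.im : GaussianInt) * ω := by
  ext <;> simp [ω, Zsqrtd.re_mul, Zsqrtd.im_mul]

theorem mem_map_E {H : AddSubgroup (ℤ × ℤ)} {x : GaussianInt} :
    x ∈ AddSubgroup.map E.toAddMonoidHom H ↔ ∃ h ∈ H, E h = x := by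
  simp [AddSubgroup.mem_map]

/-- The ideal of `ℤ[i]` corresponding to an `ℓ`-invariant subgroup of `ℤ²`. -/
def toIdealFun (H : AddSubgroup (ℤ × ℤ)) (hH : H.map ell = H) : Ideal GaussianInt :=
  { carrier := (AddSubgroup.map E.toAddMonoidHom H : Set GaussianInt)
    add_mem' := fun ha hb => (AddSubgroup.map E.toAddMonoidHom H).add_mem ha hb
    zero_mem' := (AddSubgroup.map E.toAddMonoidHom H).zero_mem
    smul_mem' := by
      intro c x hx
      have hx' : x ∈ AddSubgroup.map E.toAddMonoidHom H := hx
      have hωK : ∀ y, y ∈ AddSubgroup.map E.toAddMonoidHom H →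
          ω * y ∈ AddSubgroup.map E.toAddMonoidHom H := by
        intro y hy
        obtain ⟨h, hh, rfl⟩ := mem_map_E.mp hy
        have hmem : ell h ∈ H := by
          rw [← hH]
          exact ⟨h, hh, rfl⟩
        exact mem_map_E.mpr ⟨ell h, hmem, E_ell h⟩
      have h1 : (c.re : GaussianInt) * x ∈ AddSubgroup.map E.toAddMonoidHom H := by
        rw [← zsmul_eq_mul]
        exact (AddSubgroup.map E.toAddMonoidHom H).zsmul_mem hx' _
      have h2 : (c.im : GaussianInt) * (ω * x) ∈ AddSubgroup.map E.toAddMonoidHom H := by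
        rw [← zsmul_eq_mul]
        exact (AddSubgroup.map E.toAddMonoidHom H).zsmul_mem (hωK x hx') _
      have hdec : c • x = (c.re : GaussianInt) * x + (c.im : GaussianInt) * (ω * x) := by
        rw [smul_eq_mul]
        conv_lhs => rw [decomp c]
        ring
      show c • x ∈ AddSubgroup.map E.toAddMonoidHom H
      rw [hdec]
      exact (AddSubgroup.map E.toAddMonoidHom H).add_mem h1 h2 }

theorem toIdealFun_toAddSubgroup (H : AddSubgroup (ℤ × ℤ)) (hH : H.map ell = H) :
    (toIdealFun H hH).toAddSubgroup = AddSubgroup.map E.toAddMonoidHom H := by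
  ext x; exact Iff.rfl

/-- The induced equivalence of quotients. -/
def qe (H : AddSubgroup (ℤ × ℤ)) (hH : H.map ell = H) :
    ((ℤ × ℤ) ⧸ H) ≃+ (GaussianInt ⧸ toIdealFun H hH) :=
  QuotientAddGroup.congr H (toIdealFun H hH).toAddSubgroup E
    (by rw [toIdealFun_toAddSubgroup]; rfl)

theorem qe_mk (H : AddSubgroup (ℤ × ℤ)) (hH : H.map ell = H) (p : ℤ × ℤ) :
    qe H hH (QuotientAddGroup.mk p) = Ideal.Quotient.mk (toIdealFun H hH) (E p) := rfl

theorem ell_symm (z : GaussianInt) : ell (E.symm z) = E.symm (ω * z) := by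
  apply E.injective
  rw [E_ell, AddEquiv.apply_symm_apply, AddEquiv.apply_symm_apply]

abbrev BaseT (n : ℕ) := {H : AddSubgroup (ℤ × ℤ) // H.index = n ∧ H.map ell = H}
abbrev IdlT (n : ℕ) := {I : Ideal GaussianInt // Nat.card (GaussianInt ⧸ I) = n}
abbrev FibT (H : AddSubgroup (ℤ × ℤ)) :=
  {ν : (ℤ × ℤ) ⧸ H // ∀ g : ℤ × ℤ, QuotientAddGroup.mk g = ν →
    (QuotientAddGroup.mk (ell g) : (ℤ × ℤ) ⧸ H) = ν}

theorem index_eq (H : AddSubgroup (ℤ × ℤ)) : H.index = Nat.card ((ℤ × ℤ) ⧸ H) := rfl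

/-- The base map. -/
def baseFun (n : ℕ) : BaseT n → IdlT n := fun a =>
  ⟨toIdealFun a.1 a.2.2, by
    rw [← Nat.card_congr (qe a.1 a.2.2).toEquiv, ← index_eq]
    exact a.2.1⟩

theorem baseFun_bijective (n : ℕ) : Function.Bijective (baseFun n) := by
  constructor
  · rintro ⟨H, h1, h2⟩ ⟨H', h1', h2'⟩ h
    have h3 := congrArg (fun x : IdlT n => (x.1 : Ideal GaussianInt).toAddSubgroup) h
    simp only [baseFun, toIdealFun_toAddSubgroup] at h3
    exact Subtype.ext (AddSubgroup.map_injective (E.injective) h3)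
  · rintro ⟨I, hI⟩
    set H := AddSubgroup.map E.symm.toAddMonoidHom I.toAddSubgroup with hHdef
    have hmem : ∀ x, x ∈ H ↔ ∃ z ∈ I, E.symm z = x := by
      intro x; simp [hHdef, AddSubgroup.mem_map]
    have hmapell : H.map ell = H := by
      apply le_antisymm
      · rintro x ⟨y, hy, rfl⟩
        obtain ⟨z, hz, rfl⟩ := (hmem y).mp hy
        rw [ell_symm]
        exact (hmem _).mpr ⟨ω * z, I.mul_mem_left ω hz, rfl⟩
      · intro x hx
        obtain ⟨z, hz, rfl⟩ := (hmem x).mp hx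
        refine ⟨E.symm (ω * (ω * (ω * z))), (hmem _).mpr
          ⟨ω * (ω * (ω * z)), I.mul_mem_left ω (I.mul_mem_left ω (I.mul_mem_left ω hz)), rfl⟩, ?_⟩
        rw [ell_symm, ω_pow_four]
    have hback : toIdealFun H hmapell = I := by
      apply SetLike.ext'
      have : (toIdealFun H hmapell).toAddSubgroup =
          AddSubgroup.map E.toAddMonoidHom (AddSubgroup.map E.symm.toAddMonoidHom I.toAddSubgroup) :=
        toIdealFun_toAddSubgroup H hmapell
      have h2 : AddSubgroup.map E.toAddMonoidHom (AddSubgroup.map E.symm.toAddMonoidHom I.toAddSubgroup)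
          = I.toAddSubgroup := by
        rw [AddSubgroup.map_map]
        have : E.toAddMonoidHom.comp E.symm.toAddMonoidHom = AddMonoidHom.id _ := by
          apply AddMonoidHom.ext; intro z; exact E.apply_symm_apply z
        rw [this, AddSubgroup.map_id]
      have h3 := this.trans h2
      exact congrArg (fun K : AddSubgroup GaussianInt => (K : Set GaussianInt)) h3
    refine ⟨⟨H, ?_, hmapell⟩, ?_⟩
    · rw [index_eq, Nat.card_congr (qe H hmapell).toEquiv, hback]
      exact hI
    · apply Subtype.ext
      show toIdealFun H hmapell = I
      exact hback

/-- The fiberwise equivalence. -/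
def fibEquiv (H : AddSubgroup (ℤ × ℤ)) (hH : H.map ell = H) :
    FibT H ≃ FixC (toIdealFun H hH) := by
  refine Equiv.subtypeEquiv (qe H hH).toEquiv (fun ν => ?_)
  constructor
  · intro hfix
    obtain ⟨g, hg⟩ := QuotientAddGroup.mk_surjective ν
    have h1 := hfix g hg
    show Ideal.Quotient.mk _ ω * (qe H hH) ν = (qe H hH) ν
    rw [← hg, qe_mk, ← map_mul, ← E_ell, ← qe_mk H hH, ← qe_mk H hH]
    exact congrArg (qe H hH) (h1.trans hg.symm)
  · intro hfix g hg
    have h2 : Ideal.Quotient.mk _ ω * (qe H hH) ν = (qe H hH) ν := hfix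
    apply (qe H hH).injective
    rw [qe_mk, E_ell, map_mul, ← qe_mk H hH, hg]
    exact h2

/-- Repack the statement's subtype as a sigma type. -/
def repack (n : ℕ) :
    {p : Σ H : AddSubgroup (ℤ × ℤ), (ℤ × ℤ) ⧸ H //
        p.1.index = n ∧ p.1.map ell = p.1 ∧
        ∀ g : ℤ × ℤ, QuotientAddGroup.mk g = p.2 →
          (QuotientAddGroup.mk (ell g) : (ℤ × ℤ) ⧸ p.1) = p.2} ≃
    Σ a : BaseT n, FibT a.1 where
  toFun p := ⟨⟨p.1.1, p.2.1, p.2.2.1⟩, ⟨p.1.2, p.2.2.2⟩⟩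
  invFun q := ⟨⟨q.1.1, q.2.1⟩, q.1.2.1, q.1.2.2, q.2.2⟩
  left_inv p := rfl
  right_inv q := rfl

end SumFixed

open SumFixed in
/-- The total number `R(n)` of pairs `(H, ν)`, where `H ≤ ℤ²` is an `ℓ`-invariant subgroup
of index `n` and `ν ∈ ℤ²/H` is a coset fixed by `ℓ`, equals `τ(n) + τ(n/2)` (with
`τ(n/2) = 0` for odd `n`). -/
theorem sum_fixed_cosets (n : ℕ) (hn : 0 < n) :
    Nat.card {p : Σ H : AddSubgroup (ℤ × ℤ), (ℤ × ℤ) ⧸ H //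
        p.1.index = n ∧ p.1.map ell = p.1 ∧
        ∀ g : ℤ × ℤ, QuotientAddGroup.mk g = p.2 →
          (QuotientAddGroup.mk (ell g) : (ℤ × ℤ) ⧸ p.1) = p.2} =
      tauFn n + (if 2 ∣ n then tauFn (n / 2) else 0) := by
  have hbig : Nat.card {p : Σ H : AddSubgroup (ℤ × ℤ), (ℤ × ℤ) ⧸ H //
        p.1.index = n ∧ p.1.map ell = p.1 ∧
        ∀ g : ℤ × ℤ, QuotientAddGroup.mk g = p.2 →
          (QuotientAddGroup.mk (ell g) : (ℤ × ℤ) ⧸ p.1) = p.2} =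
      Nat.card (Σ I : IdlT n, FixC I.1) := by
    apply Nat.card_congr
    exact (repack n).trans
      (Equiv.sigmaCongr (Equiv.ofBijective (baseFun n) (baseFun_bijective n))
        (fun a => fibEquiv a.1 a.2.2))
  rw [hbig]
  by_cases he : 2 ∣ n
  · rw [if_pos he]
    have e := Equiv.sigmaCongrRight
      (fun I : IdlT n => Classical.choice (fix_even_equiv I.2 hn he))
    rw [Nat.card_congr (e.trans (Equiv.sigmaEquivProd _ _)), Nat.card_prod,
      card_quot_span, norm_omega_sub_one]
    have h2 : (2 : ℤ).natAbs = 2 := rfl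
    rw [h2, tauFn_eq_card_ideals n hn, tauFn_eq_card_ideals (n / 2) (by omega),
      ← card_ideals_halve n hn he]
    ring
  · rw [if_neg he, add_zero]
    have e : (Σ I : IdlT n, FixC I.1) ≃ Σ _ : IdlT n, PUnit.{1} :=
      Equiv.sigmaCongrRight (fun I : IdlT n =>
        have h := Nat.card_eq_one_iff_unique.mp (card_fix_odd I.2 hn he)
        @Equiv.equivPUnit (FixC I.1) (@Unique.mk' _ (Classical.inhabited_of_nonempty h.2) h.1))
    have hp : Nat.card PUnit.{1} = 1 := Nat.card_unique
    rw [Nat.card_congr (e.trans (Equiv.sigmaEquivProd _ _)), Nat.card_prod, hp, mul_one,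
      tauFn_eq_card_ideals n hn]
end

section
/- The number of subgroups of index n in G₂ = ⟨x, y, z : [x,y]=1, zxz⁻¹=x⁻¹, zyz⁻¹=y⁻¹⟩ that are isomorphic to G₂ equals ω(n) − ω(n/2), where ω(m) = ∑_{k∣m} k·σ₁(k) and ω(n/2) = 0 if n is odd. -/
/-- The relations of `G₂ = ⟨x, y, z : xyx⁻¹y⁻¹ = 1, zxz⁻¹ = x⁻¹, zyz⁻¹ = y⁻¹⟩`,
with `x, y, z` being the generators `0, 1, 2 : Fin 3`. -/
def relsG2 : Set (FreeGroup (Fin 3)) :=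
  { FreeGroup.of 0 * FreeGroup.of 1 * (FreeGroup.of 0)⁻¹ * (FreeGroup.of 1)⁻¹,
    FreeGroup.of 2 * FreeGroup.of 0 * (FreeGroup.of 2)⁻¹ * FreeGroup.of 0,
    FreeGroup.of 2 * FreeGroup.of 1 * (FreeGroup.of 2)⁻¹ * FreeGroup.of 1 }

/-- The fundamental group `G₂ = π₁(𝒢₂)`. -/
abbrev G2 : Type := PresentedGroup relsG2

/-- The generator `x` of `G₂`. -/
def X : G2 := PresentedGroup.of 0
/-- The generator `y` of `G₂`. -/
def Y : G2 := PresentedGroup.of 1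
/-- The generator `z` of `G₂`. -/
def Z : G2 := PresentedGroup.of 2

/-- sign (-1)^c -/
def ee (c : ℤ) : ℤ := if Even c then 1 else -1

lemma ee_even {c : ℤ} (h : Even c) : ee c = 1 := if_pos h
lemma ee_odd {c : ℤ} (h : ¬ Even c) : ee c = -1 := if_neg h

lemma ee_add (c d : ℤ) : ee (c + d) = ee c * ee d := by
  by_cases hc : Even c <;> by_cases hd : Even d <;>
    simp [ee, Int.even_add, hc, hd]

lemma ee_neg (c : ℤ) : ee (-c) = ee c := by unfold ee; simp

lemma ee_sq (c : ℤ) : ee c * ee c = 1 := by unfold ee; split <;> ring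

lemma ee_add_even {x y : ℤ} (h : Even y) : ee (x + y) = ee x := by
  rw [ee_add, ee_even h, mul_one]

lemma ee_mul_right_odd {m k : ℤ} (hm : ¬ Even m) : ee (k * m) = ee k := by
  unfold ee
  by_cases hk : Even k
  · simp [hk.mul_right, hk]
  · rw [if_neg hk, if_neg]
    rw [Int.even_mul]
    tauto

lemma ee_mul_right_even {m k : ℤ} (hm : Even m) : ee (k * m) = 1 := ee_even (hm.mul_left k)

/-- coefficient for k-th power: k if m even, k % 2 if m odd -/
def s2 (m k : ℤ) : ℤ := if Even m then k else k % 2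

lemma s2_even {m : ℤ} (hm : Even m) (k : ℤ) : s2 m k = k := if_pos hm
lemma s2_odd {m : ℤ} (hm : ¬ Even m) (k : ℤ) : s2 m k = k % 2 := if_neg hm

lemma s2_add (m k k' : ℤ) : s2 m (k + k') = s2 m k + ee (k * m) * s2 m k' := by
  unfold s2
  by_cases hm : Even m
  · simp [hm, ee_mul_right_even hm]
  · rw [if_neg hm, if_neg hm, if_neg hm, ee_mul_right_odd hm]
    unfold ee
    by_cases hk : Even k
    · rw [if_pos hk, Int.even_iff] at *
      omega
    · rw [if_neg hk]
      rw [Int.even_iff] at hk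
      omega

lemma s2_succ (m k : ℤ) : s2 m (k + 1) = s2 m k + ee (k * m) := by
  rw [s2_add]
  unfold s2
  by_cases hm : Even m <;> simp [hm]

lemma s2_pred (m k : ℤ) : s2 m (k - 1) = s2 m k - ee ((k - 1) * m) := by
  have h := s2_succ m (k - 1)
  rw [sub_add_cancel] at h
  rw [h]; ring

lemma s2_neg (m k : ℤ) : s2 m (-k) = - (ee (k * m) * s2 m k) := by
  unfold s2
  by_cases hm : Even m
  · simp [hm, ee_mul_right_even hm]
  · rw [if_neg hm, if_neg hm, ee_mul_right_odd hm]
    rcases Int.even_or_odd k with hk | hk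
    · rw [ee_even hk, Int.even_iff] at *
      omega
    · rw [ee_odd (Int.not_even_iff_odd.mpr hk), Int.odd_iff] at *
      omega

lemma s2_zero (m : ℤ) : s2 m 0 = 0 := by unfold s2; simp

/-- The model group `(ℤ×ℤ) ⋊ ℤ` with `ℤ` acting by `-1`. -/
structure GG where
  v : ℤ × ℤ
  c : ℤ

namespace GG

lemma ext' {g h : GG} (h1 : g.v = h.v) (h2 : g.c = h.c) : g = h := by
  cases g; cases h; simp_all

instance : Mul GG := ⟨fun g h => ⟨g.v + ee g.c • h.v, g.c + h.c⟩⟩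
instance : One GG := ⟨⟨0, 0⟩⟩
instance : Inv GG := ⟨fun g => ⟨-(ee g.c • g.v), -g.c⟩⟩

@[simp] lemma mul_v (g h : GG) : (g * h).v = g.v + ee g.c • h.v := rfl
@[simp] lemma mul_c (g h : GG) : (g * h).c = g.c + h.c := rfl
@[simp] lemma one_v : (1 : GG).v = 0 := rfl
@[simp] lemma one_c : (1 : GG).c = 0 := rfl
@[simp] lemma inv_v (g : GG) : g⁻¹.v = -(ee g.c • g.v) := rfl
@[simp] lemma inv_c (g : GG) : g⁻¹.c = -g.c := rfl

instance : Group GG where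
  mul := (· * ·)
  one := 1
  inv := (·⁻¹)
  mul_assoc g h k := by
    refine ext' ?_ ?_ <;>
      simp [ee_add, smul_add, mul_smul, smul_smul, add_assoc, mul_comm]
  one_mul g := by refine ext' ?_ ?_ <;> simp [ee_even Even.zero]
  mul_one g := by refine ext' ?_ ?_ <;> simp
  inv_mul_cancel g := by
    refine ext' ?_ ?_ <;> simp [ee_neg, smul_smul, ee_sq]

lemma zpow_def (w : ℤ × ℤ) (m k : ℤ) :
    (⟨w, m⟩ : GG) ^ k = ⟨s2 m k • w, k * m⟩ := by
  induction k using Int.induction_on with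
  | zero => refine ext' ?_ ?_ <;> simp [s2]
  | succ j ih =>
      rw [zpow_add_one, ih]
      refine ext' ?_ ?_ <;> simp [s2_succ, add_smul] <;> ring
  | pred j ih =>
      rw [zpow_sub_one, ih]
      refine ext' ?_ ?_
      · show s2 m (-(j:ℤ)) • w + ee (-(j:ℤ) * m) • -(ee m • w) = s2 m (-(j:ℤ) - 1) • w
        rw [smul_neg, smul_smul, ← ee_add, s2_pred, sub_smul,
          show -(j:ℤ) * m + m = (-(j:ℤ) - 1) * m + 2 * m by ring,
          ee_add_even (by exact ⟨m, by ring⟩)]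
        abel
      · show -(j:ℤ) * m + -m = (-(j:ℤ) - 1) * m
        ring

end GG

open GG in
/-- The subgroup of `GG` generated by `((a,0),0), ((b,d),0), ((v1,v2),m)`. -/
def HH (m a d b v1 v2 : ℤ) : Subgroup GG where
  carrier := {g | ∃ s t k : ℤ,
    g = ⟨(s * a + t * b + s2 m k * v1, t * d + s2 m k * v2), k * m⟩}
  one_mem' := ⟨0, 0, 0, by refine GG.ext' ?_ ?_ <;> simp [s2] <;> rfl⟩
  mul_mem' := by
    rintro x y ⟨s, t, k, rfl⟩ ⟨s', t', k', rfl⟩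
    refine ⟨s + ee (k * m) * s', t + ee (k * m) * t', k + k', ?_⟩
    refine GG.ext' ?_ ?_ <;>
      simp only [GG.mul_v, GG.mul_c, Prod.smul_mk, smul_eq_mul, Prod.mk_add_mk,
        Prod.mk.injEq, s2_add]
    · constructor <;> ring
    · ring
  inv_mem' := by
    rintro x ⟨s, t, k, rfl⟩
    refine ⟨-(ee (k * m) * s), -(ee (k * m) * t), -k, ?_⟩
    refine GG.ext' ?_ ?_ <;>
      simp only [GG.inv_v, GG.inv_c, Prod.smul_mk, smul_eq_mul, Prod.neg_mk,
        Prod.mk.injEq, s2_neg]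
    · constructor <;> ring
    · ring

lemma mem_HH_iff {m a d b v1 v2 : ℤ} {g : GG} :
    g ∈ HH m a d b v1 v2 ↔ ∃ s t k : ℤ,
      g = ⟨(s * a + t * b + s2 m k * v1, t * d + s2 m k * v2), k * m⟩ :=
  Iff.rfl

lemma eq_zero_of_mul_bounded {m k : ℤ} (hm : 0 < m) (h1 : -m < k * m) (h2 : k * m < m) :
    k = 0 := by
  rcases lt_trichotomy k 0 with h | h | h
  · have : k * m ≤ -1 * m := mul_le_mul_of_nonneg_right (by omega) hm.le
    omega
  · exact h
  · have : 1 * m ≤ k * m := mul_le_mul_of_nonneg_right (by omega) hm.le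
    omega

lemma index_HH (m a d b v1 v2 : ℤ) (hm : 0 < m) (ha : 0 < a) (hd : 0 < d) :
    (HH m a d b v1 v2).index = (a * d * m).toNat := by
  set H := HH m a d b v1 v2 with hH
  set f : Fin a.toNat × Fin d.toNat × Fin m.toNat → GG ⧸ H :=
    fun p => QuotientGroup.mk (⟨((p.1 : ℤ), (p.2.1 : ℤ)), (p.2.2 : ℤ)⟩ : GG) with hf
  have hbij : Function.Bijective f := by
    constructor
    · rintro ⟨i, j, k⟩ ⟨i', j', k'⟩ hfe
      have hi := i.2; have hj := j.2; have hk := k.2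
      have hi' := i'.2; have hj' := j'.2; have hk' := k'.2
      rw [hf] at hfe
      simp only at hfe
      rw [QuotientGroup.eq] at hfe
      obtain ⟨s, t, k0, heq⟩ := hfe
      have hc := congrArg GG.c heq
      simp only [GG.mul_c, GG.inv_c] at hc
      have hk0 : k0 = 0 := by
        refine eq_zero_of_mul_bounded hm ?_ ?_ <;> rw [← hc] <;> omega
      subst hk0
      have hv := congrArg GG.v heq
      simp only [GG.mul_v, GG.inv_v, GG.inv_c, ee_neg, Prod.smul_mk, smul_eq_mul,
        Prod.neg_mk, Prod.mk_add_mk, Prod.mk.injEq, s2_zero] at hv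
      obtain ⟨hv1, hv2⟩ := hv
      set ε := ee ((k : ℤ)) with hε
      have hε2 : ε * ε = 1 := ee_sq _
      have hjj : (ε * t) * d = (j' : ℤ) - (j : ℤ) := by
        linear_combination (-ε) * hv2 + ((j' : ℤ) - (j : ℤ)) * hε2
      have ht0 : ε * t = 0 := by
        refine eq_zero_of_mul_bounded hd ?_ ?_ <;> rw [hjj] <;> omega
      have ht : t = 0 := by linear_combination ε * ht0 + (-t) * hε2
      subst ht
      have hjeq : (j : ℤ) = (j' : ℤ) := by rw [mul_comm, ht0] at hjj; omega
      have hii : (ε * s) * a = (i' : ℤ) - (i : ℤ) := by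
        linear_combination (-ε) * hv1 + ((i' : ℤ) - (i : ℤ)) * hε2
      have hs0 : ε * s = 0 := by
        refine eq_zero_of_mul_bounded ha ?_ ?_ <;> rw [hii] <;> omega
      have hieq : (i : ℤ) = (i' : ℤ) := by rw [mul_comm, hs0] at hii; omega
      have e1 : i = i' := by apply Fin.ext; omega
      have e2 : j = j' := by apply Fin.ext; omega
      have e3 : k = k' := by apply Fin.ext; omega
      rw [e1, e2, e3]
    · intro q
      induction q using QuotientGroup.induction_on with | H g => ?_
      obtain ⟨⟨x, y⟩, c⟩ := g
      set k := c % m with hkdef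
      set K := c / m with hKdef
      have hkb1 : 0 ≤ k := Int.emod_nonneg c hm.ne'
      have hkb2 : k < m := Int.emod_lt_of_pos c hm
      have HC : m * K + k = c := Int.mul_ediv_add_emod c m
      set ε := ee k with hε
      have hε2 : ε * ε = 1 := ee_sq _
      set Q1 := ε * x - s2 m K * v1 with hQ1
      set Q2 := ε * y - s2 m K * v2 with hQ2
      set t := ε * ((ε * Q2) / d) with htdef
      set j := (ε * Q2) % d with hjdef
      set s := ε * ((ε * (Q1 - t * b)) / a) with hsdef
      set i := (ε * (Q1 - t * b)) % a with hidef
      have hib1 : 0 ≤ i := Int.emod_nonneg _ ha.ne'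
      have hib2 : i < a := Int.emod_lt_of_pos _ ha
      have hjb1 : 0 ≤ j := Int.emod_nonneg _ hd.ne'
      have hjb2 : j < d := Int.emod_lt_of_pos _ hd
      have HJ : d * ((ε * Q2) / d) + j = ε * Q2 := Int.mul_ediv_add_emod _ _
      have HI : a * ((ε * (Q1 - t * b)) / a) + i = ε * (Q1 - t * b) := Int.mul_ediv_add_emod _ _
      have hj' : ε * j = Q2 - t * d := by
        linear_combination ε * HJ + Q2 * hε2
      have hi' : ε * i = Q1 - t * b - s * a := by
        linear_combination ε * HI + (Q1 - t * b) * hε2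
      refine ⟨⟨⟨i.toNat, by omega⟩, ⟨j.toNat, by omega⟩, ⟨k.toNat, by omega⟩⟩, ?_⟩
      rw [hf]
      simp only []
      rw [show ((⟨(((i.toNat : ℕ) : ℤ), ((j.toNat : ℕ) : ℤ)), ((k.toNat : ℕ) : ℤ)⟩ : GG))
          = (⟨(i, j), k⟩ : GG) by
        refine GG.ext' ?_ ?_ <;> simp <;> omega]
      rw [QuotientGroup.eq]
      refine ⟨s, t, K, ?_⟩
      refine GG.ext' ?_ ?_
      · simp only [GG.mul_v, GG.inv_v, GG.inv_c, ee_neg, Prod.smul_mk, smul_eq_mul,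
          Prod.neg_mk, Prod.mk_add_mk, Prod.mk.injEq]
        constructor
        · linear_combination (-1) * hi' + (-1) * hQ1
        · linear_combination (-1) * hj' + (-1) * hQ2
      · simp only [GG.mul_c, GG.inv_c]
        linear_combination (-1) * HC
  have hcard : H.index = Nat.card (Fin a.toNat × Fin d.toNat × Fin m.toNat) := by
    rw [Subgroup.index, (Nat.card_eq_of_bijective f hbij)]
  rw [hcard, Nat.card_eq_fintype_card]
  simp only [Fintype.card_prod, Fintype.card_fin]
  have h2 : a * d * m = ((a.toNat * d.toNat * m.toNat : ℕ) : ℤ) := by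
    push_cast
    rw [Int.toNat_of_nonneg ha.le, Int.toNat_of_nonneg hd.le, Int.toNat_of_nonneg hm.le]
  rw [h2, Int.toNat_natCast, mul_assoc]

lemma int_addsubgroup_gen (S : AddSubgroup ℤ) : ∃ m : ℤ, 0 ≤ m ∧ ∀ x, x ∈ S ↔ m ∣ x := by
  obtain ⟨a, ha⟩ := Int.subgroup_cyclic S
  refine ⟨|a|, abs_nonneg a, fun x => ?_⟩
  rw [ha, AddSubgroup.mem_closure_singleton, abs_dvd]
  constructor
  · rintro ⟨n, rfl⟩
    exact Dvd.intro n (by rw [smul_eq_mul, mul_comm])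
  · rintro ⟨n, rfl⟩
    exact ⟨n, by rw [smul_eq_mul, mul_comm]⟩

lemma index_zero_of_inj {G : Type*} [Group G] (H : Subgroup G) (f : ℤ → G)
    (hf : ∀ p q : ℤ, (f p)⁻¹ * f q ∈ H → p = q) : H.index = 0 := by
  have hinj : Function.Injective (fun p => (QuotientGroup.mk (f p) : G ⧸ H)) := by
    intro p q h
    exact hf p q (QuotientGroup.eq.mp h)
  have : Infinite (G ⧸ H) := Infinite.of_injective _ hinj
  rw [Subgroup.index_eq_card]
  exact Nat.card_eq_zero_of_infinite

namespace GG

lemma one_def : (1 : GG) = ⟨(0, 0), 0⟩ := by refine ext' ?_ ?_ <;> simp <;> rfl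

lemma mul_zero_zero (x y x' y' : ℤ) :
    (⟨(x, y), 0⟩ : GG) * ⟨(x', y'), 0⟩ = ⟨(x + x', y + y'), 0⟩ := by
  refine ext' ?_ ?_ <;> simp [ee_even Even.zero]

lemma inv_zero_zero (x y : ℤ) : (⟨(x, y), 0⟩ : GG)⁻¹ = ⟨(-x, -y), 0⟩ := by
  refine ext' ?_ ?_ <;> simp [ee_even Even.zero]

end GG

/-- projection of H to the z-coordinate -/
def Sz (H : Subgroup GG) : AddSubgroup ℤ where
  carrier := {c | ∃ w : ℤ × ℤ, (⟨w, c⟩ : GG) ∈ H}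
  zero_mem' := ⟨0, H.one_mem⟩
  add_mem' := by
    intro c c' hc hc'
    obtain ⟨w, hw⟩ := hc
    obtain ⟨w', hw'⟩ := hc'
    exact ⟨w + ee c • w', mul_mem hw hw'⟩
  neg_mem' := by
    intro c hc
    obtain ⟨w, hw⟩ := hc
    exact ⟨-(ee c • w), inv_mem hw⟩

lemma mem_Sz {H : Subgroup GG} {c : ℤ} : c ∈ Sz H ↔ ∃ w, (⟨w, c⟩ : GG) ∈ H := Iff.rfl

/-- projection of H ∩ N to the y-coordinate -/
def Sd (H : Subgroup GG) : AddSubgroup ℤ where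
  carrier := {y | ∃ x : ℤ, (⟨(x, y), 0⟩ : GG) ∈ H}
  zero_mem' := ⟨0, H.one_mem⟩
  add_mem' := by
    intro y y' hy hy'
    obtain ⟨x, hx⟩ := hy
    obtain ⟨x', hx'⟩ := hy'
    have h := mul_mem hx hx'
    rw [GG.mul_zero_zero] at h
    exact ⟨x + x', h⟩
  neg_mem' := by
    intro y hy
    obtain ⟨x, hx⟩ := hy
    have h := inv_mem hx
    rw [GG.inv_zero_zero] at h
    exact ⟨-x, h⟩

lemma mem_Sd {H : Subgroup GG} {y : ℤ} : y ∈ Sd H ↔ ∃ x, (⟨(x, y), 0⟩ : GG) ∈ H := Iff.rfl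

/-- the x-axis part of H -/
def Sa (H : Subgroup GG) : AddSubgroup ℤ where
  carrier := {x | (⟨(x, 0), 0⟩ : GG) ∈ H}
  zero_mem' := H.one_mem
  add_mem' := by
    intro x x' hx hx'
    have hx2 : (⟨(x, 0), 0⟩ : GG) ∈ H := hx
    have hx2' : (⟨(x', 0), 0⟩ : GG) ∈ H := hx'
    have h := mul_mem hx2 hx2'
    rw [GG.mul_zero_zero] at h
    simpa using h
  neg_mem' := by
    intro x hx
    have hx2 : (⟨(x, 0), 0⟩ : GG) ∈ H := hx
    have h := inv_mem hx2
    rw [GG.inv_zero_zero] at h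
    simpa using h

lemma mem_Sa {H : Subgroup GG} {x : ℤ} : x ∈ Sa H ↔ (⟨(x, 0), 0⟩ : GG) ∈ H := Iff.rfl

lemma exists_params {H : Subgroup GG} (hn : H.index ≠ 0) :
    ∃ m a d b v1 v2 : ℤ, 0 < m ∧ 0 < a ∧ 0 < d ∧
      0 ≤ b ∧ b < a ∧ 0 ≤ v1 ∧ v1 < a ∧ 0 ≤ v2 ∧ v2 < d ∧
      H = HH m a d b v1 v2 := by
  obtain ⟨m, hm0, hmz⟩ := int_addsubgroup_gen (Sz H)
  obtain ⟨d, hd0, hdz⟩ := int_addsubgroup_gen (Sd H)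
  obtain ⟨a, ha0, haz⟩ := int_addsubgroup_gen (Sa H)
  have hm : 0 < m := by
    rcases hm0.lt_or_eq with h | h
    · exact h
    exfalso; apply hn
    apply index_zero_of_inj H (fun p => ⟨(0, 0), p⟩)
    intro p q hpq
    have hpq' : (⟨(0, 0), p⟩ : GG)⁻¹ * ⟨(0, 0), q⟩ ∈ H := hpq
    have key : (⟨(0, 0), p⟩ : GG)⁻¹ * ⟨(0, 0), q⟩ = ⟨(0, 0), -p + q⟩ := by
      refine GG.ext' ?_ ?_ <;> simp
    rw [key] at hpq'
    have hmem : (-p + q) ∈ Sz H := ⟨_, hpq'⟩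
    rw [hmz, ← h, zero_dvd_iff] at hmem
    omega
  have hd : 0 < d := by
    rcases hd0.lt_or_eq with h | h
    · exact h
    exfalso; apply hn
    apply index_zero_of_inj H (fun p => ⟨(0, p), 0⟩)
    intro p q hpq
    have hpq' : (⟨(0, p), 0⟩ : GG)⁻¹ * ⟨(0, q), 0⟩ ∈ H := hpq
    have key : (⟨(0, p), 0⟩ : GG)⁻¹ * ⟨(0, q), 0⟩ = ⟨(0, -p + q), 0⟩ := by
      refine GG.ext' ?_ ?_ <;> simp [ee_even Even.zero]
    rw [key] at hpq'
    have hmem : (-p + q) ∈ Sd H := ⟨_, hpq'⟩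
    rw [hdz, ← h, zero_dvd_iff] at hmem
    omega
  have ha : 0 < a := by
    rcases ha0.lt_or_eq with h | h
    · exact h
    exfalso; apply hn
    apply index_zero_of_inj H (fun p => ⟨(p, 0), 0⟩)
    intro p q hpq
    have hpq' : (⟨(p, 0), 0⟩ : GG)⁻¹ * ⟨(q, 0), 0⟩ ∈ H := hpq
    have key : (⟨(p, 0), 0⟩ : GG)⁻¹ * ⟨(q, 0), 0⟩ = ⟨(-p + q, 0), 0⟩ := by
      refine GG.ext' ?_ ?_ <;> simp [ee_even Even.zero]
    rw [key] at hpq'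
    have hmem : (-p + q) ∈ Sa H := hpq'
    rw [haz, ← h, zero_dvd_iff] at hmem
    omega
  -- witnesses
  have hamem : (⟨(a, 0), 0⟩ : GG) ∈ H := (haz a).mpr dvd_rfl
  obtain ⟨b0, hb0⟩ : ∃ x, (⟨(x, d), 0⟩ : GG) ∈ H := (hdz d).mpr dvd_rfl
  obtain ⟨⟨w1, w2⟩, hw⟩ : ∃ w : ℤ × ℤ, (⟨w, m⟩ : GG) ∈ H := (hmz m).mpr dvd_rfl
  -- normalized b
  have hb : (⟨(b0 % a, d), 0⟩ : GG) ∈ H := by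
    have key : (⟨(b0, d), 0⟩ : GG) * ((⟨(a, 0), 0⟩ : GG) ^ (-(b0 / a))) = ⟨(b0 % a, d), 0⟩ := by
      rw [GG.zpow_def]
      refine GG.ext' ?_ ?_
      · simp only [GG.mul_v, Prod.smul_mk, smul_eq_mul, Prod.mk_add_mk,
          Prod.mk.injEq, s2_even Even.zero, ee_even Even.zero, mul_zero, one_mul, add_zero]
        constructor
        · rw [Int.emod_def]; ring
        · trivial
      · simp only [GG.mul_c]; ring
    rw [← key]
    exact mul_mem hb0 (zpow_mem hamem _)
  set b := b0 % a with hbdef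
  -- normalized v
  set v2 := w2 % d with hv2def
  set u1 := w1 - (w2 / d) * b with hu1def
  set v1 := u1 % a with hv1def
  have hv : (⟨(v1, v2), m⟩ : GG) ∈ H := by
    have key : (⟨(a, 0), 0⟩ : GG) ^ (-(u1 / a)) *
        ((⟨(b, d), 0⟩ : GG) ^ (-(w2 / d)) * ⟨(w1, w2), m⟩) = ⟨(v1, v2), m⟩ := by
      rw [GG.zpow_def, GG.zpow_def]
      refine GG.ext' ?_ ?_
      · simp only [GG.mul_v, Prod.smul_mk, smul_eq_mul, Prod.mk_add_mk,
          Prod.mk.injEq, s2_even Even.zero, ee_even Even.zero, mul_zero, one_mul, add_zero,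
          zero_add]
        constructor
        · rw [hv1def, Int.emod_def, hu1def]; ring
        · rw [hv2def, Int.emod_def]; ring
      · simp only [GG.mul_c]; ring
    rw [← key]
    exact mul_mem (zpow_mem hamem _) (mul_mem (zpow_mem hb _) hw)
  refine ⟨m, a, d, b, v1, v2, hm, ha, hd, Int.emod_nonneg _ ha.ne', Int.emod_lt_of_pos _ ha,
    Int.emod_nonneg _ ha.ne', Int.emod_lt_of_pos _ ha,
    Int.emod_nonneg _ hd.ne', Int.emod_lt_of_pos _ hd, ?_⟩
  ext g
  obtain ⟨⟨x, y⟩, c⟩ := g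
  constructor
  · intro hg
    have hcz : m ∣ c := (hmz c).mp ⟨_, hg⟩
    obtain ⟨k, rfl⟩ := hcz
    have key1 : (⟨(x, y), m * k⟩ : GG) * ((⟨(v1, v2), m⟩ : GG) ^ k)⁻¹
        = ⟨(x - s2 m k * v1, y - s2 m k * v2), 0⟩ := by
      rw [GG.zpow_def]
      refine GG.ext' ?_ ?_
      · simp only [GG.mul_v, GG.inv_v, GG.inv_c, Prod.smul_mk, smul_eq_mul,
          Prod.neg_mk, Prod.mk_add_mk, Prod.mk.injEq, mul_comm m k]
        constructor
        · linear_combination (-(s2 m k * v1)) * ee_sq (k * m)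
        · linear_combination (-(s2 m k * v2)) * ee_sq (k * m)
      · simp only [GG.mul_c, GG.inv_c]
        ring
    have h1 : (⟨(x - s2 m k * v1, y - s2 m k * v2), 0⟩ : GG) ∈ H :=
      key1 ▸ mul_mem hg (inv_mem (zpow_mem hv k))
    obtain ⟨t, htt⟩ : d ∣ (y - s2 m k * v2) := (hdz _).mp ⟨_, h1⟩
    have key2 : (⟨(x - s2 m k * v1, y - s2 m k * v2), 0⟩ : GG) * ((⟨(b, d), 0⟩ : GG) ^ t)⁻¹
        = ⟨(x - s2 m k * v1 - t * b, 0), 0⟩ := by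
      rw [GG.zpow_def]
      refine GG.ext' ?_ ?_
      · simp only [GG.mul_v, GG.inv_v, GG.inv_c, Prod.smul_mk, smul_eq_mul,
          Prod.neg_mk, Prod.mk_add_mk, Prod.mk.injEq, s2_even Even.zero,
          ee_even Even.zero, mul_zero, one_mul, neg_zero]
        constructor
        · ring
        · linear_combination htt
      · simp only [GG.mul_c, GG.inv_c]
        ring
    have h2 : (⟨(x - s2 m k * v1 - t * b, 0), 0⟩ : GG) ∈ H :=
      key2 ▸ mul_mem h1 (inv_mem (zpow_mem hb t))
    obtain ⟨s, hss⟩ : a ∣ (x - s2 m k * v1 - t * b) := (haz _).mp h2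
    refine ⟨s, t, k, ?_⟩
    refine GG.ext' ?_ ?_
    · simp only [Prod.mk.injEq]
      constructor
      · linear_combination hss
      · linear_combination htt
    · simp only []
      ring
  · rintro ⟨s, t, k, heq⟩
    rw [heq]
    have key3 : (⟨(a, 0), 0⟩ : GG) ^ s * ((⟨(b, d), 0⟩ : GG) ^ t * (⟨(v1, v2), m⟩ : GG) ^ k)
        = ⟨(s * a + t * b + s2 m k * v1, t * d + s2 m k * v2), k * m⟩ := by
      rw [GG.zpow_def, GG.zpow_def, GG.zpow_def]
      refine GG.ext' ?_ ?_
      · simp only [GG.mul_v, Prod.smul_mk, smul_eq_mul, Prod.mk_add_mk,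
          Prod.mk.injEq, s2_even Even.zero, ee_even Even.zero, mul_zero, one_mul,
          add_zero, zero_add]
        exact ⟨by ring, trivial⟩
      · simp only [GG.mul_c]; ring
    rw [← key3]
    exact mul_mem (zpow_mem hamem s) (mul_mem (zpow_mem hb t) (zpow_mem hv k))

lemma s2_one (m : ℤ) : s2 m 1 = 1 := by unfold s2; split <;> simp

lemma int_dvd_antisymm {x y : ℤ} (hx : 0 < x) (hy : 0 < y) (h1 : x ∣ y) (h2 : y ∣ x) :
    x = y := Int.dvd_antisymm hx.le hy.le h1 h2

/-- Generic membership producer for HH. -/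
lemma mk_mem_HH (m a d b v1 v2 s t k : ℤ) :
    (⟨(s * a + t * b + s2 m k * v1, t * d + s2 m k * v2), k * m⟩ : GG) ∈ HH m a d b v1 v2 :=
  ⟨s, t, k, rfl⟩

lemma HH_zero_analysis {m a d b v1 v2 : ℤ} (hm : 0 < m) {x y : ℤ}
    (h : (⟨(x, y), 0⟩ : GG) ∈ HH m a d b v1 v2) :
    ∃ s t : ℤ, x = s * a + t * b ∧ y = t * d := by
  obtain ⟨s, t, k, hE⟩ := h
  simp only [GG.mk.injEq, Prod.mk.injEq] at hE
  have hk : k = 0 := by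
    rcases mul_eq_zero.mp hE.2.symm with h | h
    · exact h
    · omega
  subst hk
  rw [s2_zero] at hE
  exact ⟨s, t, by linear_combination hE.1.1, by linear_combination hE.1.2⟩

lemma HH_m_analysis {m a d b v1 v2 : ℤ} (hm : 0 < m) {x y : ℤ}
    (h : (⟨(x, y), m⟩ : GG) ∈ HH m a d b v1 v2) :
    ∃ s t : ℤ, x = s * a + t * b + v1 ∧ y = t * d + v2 := by
  obtain ⟨s, t, k, hE⟩ := h
  simp only [GG.mk.injEq, Prod.mk.injEq] at hE
  have hk : k = 1 := by
    have h0 : (k - 1) * m = 0 := by linear_combination - hE.2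
    rcases mul_eq_zero.mp h0 with h | h
    · omega
    · omega
  subst hk
  rw [s2_one] at hE
  exact ⟨s, t, by linear_combination hE.1.1, by linear_combination hE.1.2⟩

lemma HH_inj {m a d b v1 v2 m' a' d' b' v1' v2' : ℤ}
    (hm : 0 < m) (ha : 0 < a) (hd : 0 < d) (hb : 0 ≤ b) (hba : b < a)
    (h1 : 0 ≤ v1) (h1a : v1 < a) (h2 : 0 ≤ v2) (h2d : v2 < d)
    (hm' : 0 < m') (ha' : 0 < a') (hd' : 0 < d') (hb' : 0 ≤ b') (hba' : b' < a')
    (h1' : 0 ≤ v1') (h1a' : v1' < a') (h2' : 0 ≤ v2') (h2d' : v2' < d')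
    (heq : HH m a d b v1 v2 = HH m' a' d' b' v1' v2') :
    m = m' ∧ a = a' ∧ d = d' ∧ b = b' ∧ v1 = v1' ∧ v2 = v2' := by
  have hA : (⟨(a, 0), 0⟩ : GG) ∈ HH m a d b v1 v2 := by
    have := mk_mem_HH m a d b v1 v2 1 0 0
    simpa [s2_zero] using this
  have hA' : (⟨(a', 0), 0⟩ : GG) ∈ HH m' a' d' b' v1' v2' := by
    have := mk_mem_HH m' a' d' b' v1' v2' 1 0 0
    simpa [s2_zero] using this
  have hB : (⟨(b, d), 0⟩ : GG) ∈ HH m a d b v1 v2 := by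
    have := mk_mem_HH m a d b v1 v2 0 1 0
    simpa [s2_zero] using this
  have hB' : (⟨(b', d'), 0⟩ : GG) ∈ HH m' a' d' b' v1' v2' := by
    have := mk_mem_HH m' a' d' b' v1' v2' 0 1 0
    simpa [s2_zero] using this
  have hV : (⟨(v1, v2), m⟩ : GG) ∈ HH m a d b v1 v2 := by
    have := mk_mem_HH m a d b v1 v2 0 0 1
    simpa [s2_one] using this
  have hV' : (⟨(v1', v2'), m'⟩ : GG) ∈ HH m' a' d' b' v1' v2' := by
    have := mk_mem_HH m' a' d' b' v1' v2' 0 0 1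
    simpa [s2_one] using this
  -- m = m'
  have hmm : m = m' := by
    obtain ⟨s, t, k, hE⟩ := heq ▸ hV
    obtain ⟨s', t', k', hE'⟩ := heq.symm ▸ hV'
    simp only [GG.mk.injEq, Prod.mk.injEq] at hE hE'
    exact int_dvd_antisymm hm hm' ⟨k', by linear_combination hE'.2⟩
      ⟨k, by linear_combination hE.2⟩
  -- a = a'
  have haa : a = a' := by
    obtain ⟨s, t, hx, hy⟩ := HH_zero_analysis hm' (heq ▸ hA)
    obtain ⟨s', t', hx', hy'⟩ := HH_zero_analysis hm (heq.symm ▸ hA')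
    have ht : t = 0 := by
      rcases mul_eq_zero.mp hy.symm with h | h
      · exact h
      · omega
    have ht' : t' = 0 := by
      rcases mul_eq_zero.mp hy'.symm with h | h
      · exact h
      · omega
    subst ht; subst ht'
    exact int_dvd_antisymm ha ha' ⟨s', by linear_combination hx'⟩
      ⟨s, by linear_combination hx⟩
  -- d = d'
  have hdd : d = d' := by
    obtain ⟨s, t, hx, hy⟩ := HH_zero_analysis hm' (heq ▸ hB)
    obtain ⟨s', t', hx', hy'⟩ := HH_zero_analysis hm (heq.symm ▸ hB')
    exact int_dvd_antisymm hd hd' ⟨t', by linear_combination hy'⟩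
      ⟨t, by linear_combination hy⟩
  -- b = b'
  have hbb : b = b' := by
    obtain ⟨s, t, hx, hy⟩ := HH_zero_analysis hm' (heq ▸ hB)
    have ht : t = 1 := by
      rw [← hdd] at hy
      have h0 : (t - 1) * d = 0 := by linear_combination - hy
      rcases mul_eq_zero.mp h0 with h | h
      · omega
      · omega
    subst ht
    rw [← haa] at hx
    have hs : s = 0 := by
      refine eq_zero_of_mul_bounded ha ?_ ?_ <;> omega
    rw [hs] at hx
    omega
  -- v1, v2
  have hvv : v1 = v1' ∧ v2 = v2' := by
    have hV2 : (⟨(v1, v2), m'⟩ : GG) ∈ HH m' a' d' b' v1' v2' := by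
      rw [← heq, ← hmm]; exact hV
    obtain ⟨s, t, hx, hy⟩ := HH_m_analysis hm' hV2
    rw [← hdd] at hy
    have ht : t = 0 := by
      refine eq_zero_of_mul_bounded hd ?_ ?_ <;> omega
    rw [ht] at hx hy
    rw [← haa] at hx
    have hs : s = 0 := by
      refine eq_zero_of_mul_bounded ha ?_ ?_ <;> omega
    rw [hs] at hx
    constructor <;> omega
  exact ⟨hmm, haa, hdd, hbb, hvv.1, hvv.2⟩

lemma ee_zero : ee 0 = 1 := ee_even Even.zero
lemma ee_one : ee 1 = -1 := ee_odd (Int.not_even_iff_odd.mpr odd_one)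

/-- The embedding of GG onto HH (for odd m). -/
def theta (m a d b v1 v2 : ℤ) (hmodd : ¬ Even m) : GG →* GG where
  toFun g := ⟨(g.v.1 * a + g.v.2 * b + s2 m g.c * v1, g.v.2 * d + s2 m g.c * v2), g.c * m⟩
  map_one' := by refine GG.ext' ?_ ?_ <;> simp [s2_zero]
  map_mul' g h := by
    refine GG.ext' ?_ ?_
    · simp only [GG.mul_v, GG.mul_c, Prod.smul_mk, smul_eq_mul, Prod.mk_add_mk,
        Prod.mk.injEq, s2_add m g.c h.c, ee_mul_right_odd hmodd, Prod.fst_add,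
        Prod.snd_add, Prod.smul_fst, Prod.smul_snd]
      constructor <;> ring
    · simp only [GG.mul_c]
      ring

lemma theta_injective (m a d b v1 v2 : ℤ) (hmodd : ¬ Even m) (ha : 0 < a) (hd : 0 < d) :
    Function.Injective (theta m a d b v1 v2 hmodd) := by
  have hm0 : m ≠ 0 := by rintro rfl; exact hmodd Even.zero
  rw [injective_iff_map_eq_one]
  rintro ⟨⟨g1, g2⟩, gc⟩ hg
  have h1 := congrArg GG.v hg
  have h2 := congrArg GG.c hg
  simp only [theta, MonoidHom.coe_mk, OneHom.coe_mk, GG.one_v, GG.one_c, Prod.mk.injEq,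
    Prod.mk_eq_zero] at h1 h2
  have hgc : gc = 0 := by
    rcases mul_eq_zero.mp h2 with h | h
    · exact h
    · exact absurd h hm0
  subst hgc
  rw [s2_zero] at h1
  have hg2 : g2 = 0 := by
    rcases mul_eq_zero.mp (by linarith [h1.2] : g2 * d = 0) with h | h
    · exact h
    · omega
  subst hg2
  have hg1 : g1 = 0 := by
    rcases mul_eq_zero.mp (by linarith [h1.1] : g1 * a = 0) with h | h
    · exact h
    · omega
  subst hg1
  refine GG.ext' ?_ ?_ <;> simp

lemma theta_range (m a d b v1 v2 : ℤ) (hmodd : ¬ Even m) :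
    (theta m a d b v1 v2 hmodd).range = HH m a d b v1 v2 := by
  ext g
  constructor
  · rintro ⟨⟨⟨p, q⟩, r⟩, rfl⟩
    exact ⟨p, q, r, rfl⟩
  · rintro ⟨s, t, k, rfl⟩
    exact ⟨⟨(s, t), k⟩, rfl⟩

lemma HH_iso_of_odd {m a d b v1 v2 : ℤ} (hmodd : ¬ Even m) (ha : 0 < a) (hd : 0 < d) :
    Nonempty ((HH m a d b v1 v2) ≃* GG) := by
  have hinj := theta_injective m a d b v1 v2 hmodd ha hd
  exact ⟨((MonoidHom.ofInjective hinj).trans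
    (MulEquiv.subgroupCongr (theta_range m a d b v1 v2 hmodd))).symm⟩

lemma HH_comm_of_even {m a d b v1 v2 : ℤ} (hmeven : Even m) :
    ∀ g ∈ HH m a d b v1 v2, ∀ h ∈ HH m a d b v1 v2, g * h = h * g := by
  rintro g ⟨s, t, k, rfl⟩ h ⟨s', t', k', rfl⟩
  refine GG.ext' ?_ ?_
  · simp only [GG.mul_v, GG.mul_c, Prod.smul_mk, smul_eq_mul, Prod.mk_add_mk,
      Prod.mk.injEq, ee_mul_right_even hmeven]
    constructor <;> ring
  · simp only [GG.mul_c]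
    ring

lemma GG_not_comm : ¬ (∀ x y : GG, x * y = y * x) := by
  intro h
  have h2 := congrArg GG.v (h ⟨(1, 0), 0⟩ ⟨(0, 0), 1⟩)
  simp only [GG.mul_v, Prod.smul_mk, smul_eq_mul, Prod.mk_add_mk, ee_zero, ee_one,
    Prod.mk.injEq] at h2
  omega

lemma HH_not_iso_of_even {m a d b v1 v2 : ℤ} (hmeven : Even m) :
    ¬ Nonempty ((HH m a d b v1 v2) ≃* GG) := by
  rintro ⟨f⟩
  apply GG_not_comm
  intro x y
  have hcomm : ∀ u v : HH m a d b v1 v2, u * v = v * u := by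
    intro u v
    apply Subtype.ext
    exact HH_comm_of_even hmeven u u.2 v v.2
  calc x * y = f (f.symm x) * f (f.symm y) := by rw [f.apply_symm_apply, f.apply_symm_apply]
    _ = f (f.symm x * f.symm y) := (map_mul f _ _).symm
    _ = f (f.symm y * f.symm x) := by rw [hcomm]
    _ = f (f.symm y) * f (f.symm x) := map_mul f _ _
    _ = y * x := by rw [f.apply_symm_apply, f.apply_symm_apply]

lemma ee_succ (c : ℤ) : ee (c + 1) = -ee c := by rw [ee_add, ee_one]; ring
lemma ee_pred (c : ℤ) : ee (c - 1) = -ee c := by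
  rw [sub_eq_add_neg, ee_add, ee_neg, ee_one]; ring

namespace G2iso

lemma rel_mk : ∀ r ∈ relsG2, PresentedGroup.mk relsG2 r = 1 := fun r hr =>
  (QuotientGroup.eq_one_iff r).mpr (Subgroup.subset_normalClosure hr)

lemma hXY : X * Y = Y * X := by
  have h := rel_mk _ (by left; rfl)
  simp only [map_mul, map_inv] at h
  have h2 : (X * Y) * (Y * X)⁻¹ = 1 := by
    rw [mul_inv_rev]
    calc (X * Y) * (X⁻¹ * Y⁻¹)
        = X * Y * X⁻¹ * Y⁻¹ := by rw [mul_assoc (X * Y)]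
      _ = 1 := h
  exact mul_inv_eq_one.mp h2

lemma hZX : Z * X * Z⁻¹ = X⁻¹ := by
  have h := rel_mk _ (by right; left; rfl)
  simp only [map_mul, map_inv] at h
  exact mul_eq_one_iff_eq_inv.mp h

lemma hZY : Z * Y * Z⁻¹ = Y⁻¹ := by
  have h := rel_mk _ (by right; right; rfl)
  simp only [map_mul, map_inv] at h
  exact mul_eq_one_iff_eq_inv.mp h

lemma conjZX (x : ℤ) : Z * X ^ x * Z⁻¹ = X ^ (-x) := by
  have h := map_zpow (MulAut.conj Z) X x
  simp only [MulAut.conj_apply] at h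
  rw [h, hZX, inv_zpow, zpow_neg]

lemma conjZY (y : ℤ) : Z * Y ^ y * Z⁻¹ = Y ^ (-y) := by
  have h := map_zpow (MulAut.conj Z) Y y
  simp only [MulAut.conj_apply] at h
  rw [h, hZY, inv_zpow, zpow_neg]

lemma zxp (x : ℤ) : Z * X ^ x = X ^ (-x) * Z := by
  have := conjZX x
  rwa [mul_inv_eq_iff_eq_mul] at this

lemma zyp (y : ℤ) : Z * Y ^ y = Y ^ (-y) * Z := by
  have := conjZY y
  rwa [mul_inv_eq_iff_eq_mul] at this

lemma zxm (x : ℤ) : Z⁻¹ * X ^ x = X ^ (-x) * Z⁻¹ := by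
  have h := zxp (-x)
  rw [neg_neg] at h
  have := congrArg (fun w => Z⁻¹ * w * Z⁻¹) h
  simpa [mul_assoc] using this.symm

lemma zym (y : ℤ) : Z⁻¹ * Y ^ y = Y ^ (-y) * Z⁻¹ := by
  have h := zyp (-y)
  rw [neg_neg] at h
  have := congrArg (fun w => Z⁻¹ * w * Z⁻¹) h
  simpa [mul_assoc] using this.symm

lemma zc_x : ∀ c x : ℤ, Z ^ c * X ^ x = X ^ (ee c * x) * Z ^ c := by
  intro c
  induction c using Int.induction_on with
  | zero => intro x; simp [ee_zero]
  | succ j ih =>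
      intro x
      calc Z ^ ((j : ℤ) + 1) * X ^ x = Z ^ (j : ℤ) * (Z * X ^ x) := by
            rw [zpow_add_one, mul_assoc]
        _ = Z ^ (j : ℤ) * (X ^ (-x) * Z) := by rw [zxp]
        _ = (Z ^ (j : ℤ) * X ^ (-x)) * Z := by rw [mul_assoc]
        _ = (X ^ (ee (j : ℤ) * -x) * Z ^ (j : ℤ)) * Z := by rw [ih]
        _ = X ^ (ee ((j : ℤ) + 1) * x) * Z ^ ((j : ℤ) + 1) := by
            rw [show ee ((j : ℤ) + 1) * x = ee (j : ℤ) * -x by rw [ee_succ]; ring,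
              zpow_add_one, mul_assoc]
  | pred j ih =>
      intro x
      calc Z ^ (-(j : ℤ) - 1) * X ^ x = Z ^ (-(j : ℤ)) * (Z⁻¹ * X ^ x) := by
            rw [zpow_sub_one, mul_assoc]
        _ = Z ^ (-(j : ℤ)) * (X ^ (-x) * Z⁻¹) := by rw [zxm]
        _ = (Z ^ (-(j : ℤ)) * X ^ (-x)) * Z⁻¹ := by rw [mul_assoc]
        _ = (X ^ (ee (-(j : ℤ)) * -x) * Z ^ (-(j : ℤ))) * Z⁻¹ := by rw [ih]
        _ = X ^ (ee (-(j : ℤ) - 1) * x) * Z ^ (-(j : ℤ) - 1) := by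
            rw [show ee (-(j : ℤ) - 1) * x = ee (-(j : ℤ)) * -x by rw [ee_pred]; ring,
              zpow_sub_one, mul_assoc]

lemma zc_y : ∀ c y : ℤ, Z ^ c * Y ^ y = Y ^ (ee c * y) * Z ^ c := by
  intro c
  induction c using Int.induction_on with
  | zero => intro y; simp [ee_zero]
  | succ j ih =>
      intro y
      calc Z ^ ((j : ℤ) + 1) * Y ^ y = Z ^ (j : ℤ) * (Z * Y ^ y) := by
            rw [zpow_add_one, mul_assoc]
        _ = Z ^ (j : ℤ) * (Y ^ (-y) * Z) := by rw [zyp]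
        _ = (Z ^ (j : ℤ) * Y ^ (-y)) * Z := by rw [mul_assoc]
        _ = (Y ^ (ee (j : ℤ) * -y) * Z ^ (j : ℤ)) * Z := by rw [ih]
        _ = Y ^ (ee ((j : ℤ) + 1) * y) * Z ^ ((j : ℤ) + 1) := by
            rw [show ee ((j : ℤ) + 1) * y = ee (j : ℤ) * -y by rw [ee_succ]; ring,
              zpow_add_one, mul_assoc]
  | pred j ih =>
      intro y
      calc Z ^ (-(j : ℤ) - 1) * Y ^ y = Z ^ (-(j : ℤ)) * (Z⁻¹ * Y ^ y) := by
            rw [zpow_sub_one, mul_assoc]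
        _ = Z ^ (-(j : ℤ)) * (Y ^ (-y) * Z⁻¹) := by rw [zym]
        _ = (Z ^ (-(j : ℤ)) * Y ^ (-y)) * Z⁻¹ := by rw [mul_assoc]
        _ = (Y ^ (ee (-(j : ℤ)) * -y) * Z ^ (-(j : ℤ))) * Z⁻¹ := by rw [ih]
        _ = Y ^ (ee (-(j : ℤ) - 1) * y) * Z ^ (-(j : ℤ) - 1) := by
            rw [show ee (-(j : ℤ) - 1) * y = ee (-(j : ℤ)) * -y by rw [ee_pred]; ring,
              zpow_sub_one, mul_assoc]

lemma normal_mul (x y c x' y' c' : ℤ) :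
    (X ^ x * Y ^ y * Z ^ c) * (X ^ x' * Y ^ y' * Z ^ c') =
      X ^ (x + ee c * x') * Y ^ (y + ee c * y') * Z ^ (c + c') := by
  have hc : Commute X Y := hXY
  have hcz : X ^ (ee c * x') * Y ^ y = Y ^ y * X ^ (ee c * x') :=
    (hc.zpow_zpow (ee c * x') y).eq
  calc (X ^ x * Y ^ y * Z ^ c) * (X ^ x' * Y ^ y' * Z ^ c')
      = X ^ x * (Y ^ y * ((Z ^ c * X ^ x') * (Y ^ y' * Z ^ c'))) := by
        simp only [mul_assoc]
    _ = X ^ x * (Y ^ y * ((X ^ (ee c * x') * Z ^ c) * (Y ^ y' * Z ^ c'))) := by rw [zc_x]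
    _ = X ^ x * (Y ^ y * (X ^ (ee c * x') * ((Z ^ c * Y ^ y') * Z ^ c'))) := by
        simp only [mul_assoc]
    _ = X ^ x * (Y ^ y * (X ^ (ee c * x') * ((Y ^ (ee c * y') * Z ^ c) * Z ^ c'))) := by
        rw [zc_y]
    _ = X ^ x * ((Y ^ y * X ^ (ee c * x')) * (Y ^ (ee c * y') * (Z ^ c * Z ^ c'))) := by
        simp only [mul_assoc]
    _ = X ^ x * ((X ^ (ee c * x') * Y ^ y) * (Y ^ (ee c * y') * (Z ^ c * Z ^ c'))) := by
        rw [hcz]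
    _ = (X ^ x * X ^ (ee c * x')) * ((Y ^ y * Y ^ (ee c * y')) * (Z ^ c * Z ^ c')) := by
        simp only [mul_assoc]
    _ = X ^ (x + ee c * x') * Y ^ (y + ee c * y') * Z ^ (c + c') := by
        rw [← zpow_add, ← zpow_add, ← zpow_add, mul_assoc]


/-- images of the generators -/
def FF : Fin 3 → GG := fun i => if i = 0 then ⟨(1, 0), 0⟩ else if i = 1 then ⟨(0, 1), 0⟩
  else ⟨(0, 0), 1⟩

lemma FF_rels : ∀ r ∈ relsG2, FreeGroup.lift FF r = 1 := by
  rintro r (rfl | rfl | rfl) <;>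
    simp only [map_mul, map_inv, FreeGroup.lift_apply_of, FF] <;> norm_num <;>
    refine GG.ext' ?_ ?_ <;>
    simp [ee_zero, ee_one, ee_neg, Prod.ext_iff] <;> norm_num

/-- the homomorphism G2 → GG -/
def toGG : G2 →* GG := PresentedGroup.toGroup FF_rels

lemma toGG_X : toGG X = ⟨(1, 0), 0⟩ := by
  rw [toGG, X, PresentedGroup.toGroup.of]; rfl
lemma toGG_Y : toGG Y = ⟨(0, 1), 0⟩ := by
  rw [toGG, Y, PresentedGroup.toGroup.of]; rfl
lemma toGG_Z : toGG Z = ⟨(0, 0), 1⟩ := by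
  rw [toGG, Z, PresentedGroup.toGroup.of]; rfl

lemma toGG_norm (x y c : ℤ) : toGG (X ^ x * Y ^ y * Z ^ c) = ⟨(x, y), c⟩ := by
  rw [map_mul, map_mul, map_zpow, map_zpow, map_zpow, toGG_X, toGG_Y, toGG_Z,
    GG.zpow_def, GG.zpow_def, GG.zpow_def]
  refine GG.ext' ?_ ?_
  · simp [s2_even Even.zero, ee_even Even.zero, Prod.smul_mk, smul_eq_mul]
  · simp [ee_even Even.zero]

lemma norm_exists (g : G2) : ∃ x y c : ℤ, g = X ^ x * Y ^ y * Z ^ c := by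
  induction g using PresentedGroup.induction_on with
  | H z =>
    induction z using FreeGroup.induction_on with
    | C1 => exact ⟨0, 0, 0, by simp⟩
    | of i =>
        fin_cases i
        · exact ⟨1, 0, 0, by simp [X]; rfl⟩
        · exact ⟨0, 1, 0, by simp [Y]; rfl⟩
        · exact ⟨0, 0, 1, by simp [Z]; rfl⟩
    | inv_of i _ =>
        fin_cases i
        · exact ⟨-1, 0, 0, by simp [X]; rfl⟩
        · exact ⟨0, -1, 0, by simp [Y]; rfl⟩
        · exact ⟨0, 0, -1, by simp [Z]; rfl⟩
    | mul w w' hw hw' =>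
        obtain ⟨x, y, c, hxy⟩ := hw
        obtain ⟨x', y', c', hxy'⟩ := hw'
        refine ⟨x + ee c * x', y + ee c * y', c + c', ?_⟩
        rw [map_mul, hxy, hxy', normal_mul]

lemma toGG_bijective : Function.Bijective toGG := by
  constructor
  · intro g g' h
    obtain ⟨x, y, c, rfl⟩ := norm_exists g
    obtain ⟨x', y', c', rfl⟩ := norm_exists g'
    rw [toGG_norm, toGG_norm] at h
    simp only [GG.mk.injEq, Prod.mk.injEq] at h
    rw [h.1.1, h.1.2, h.2]
  · rintro ⟨⟨x, y⟩, c⟩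
    exact ⟨X ^ x * Y ^ y * Z ^ c, toGG_norm x y c⟩

/-- The isomorphism G2 ≃ GG. -/
noncomputable def EE : G2 ≃* GG := MulEquiv.ofBijective toGG toGG_bijective

end G2iso

lemma card_transfer_s15 {G G' : Type*} [Group G] [Group G'] (e : G ≃* G') (n : ℕ) :
    Nat.card {H : Subgroup G // H.index = n ∧ Nonempty (H ≃* G)} =
      Nat.card {K : Subgroup G' // K.index = n ∧ Nonempty (K ≃* G')} := by
  have hidx : ∀ (H : Subgroup G), (H.map e.toMonoidHom).index = H.index := fun H =>
    H.index_map_eq e.surjective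
      (by rw [(MonoidHom.ker_eq_bot_iff _).mpr e.injective]; exact bot_le)
  have hidx' : ∀ (K : Subgroup G'), (K.map e.symm.toMonoidHom).index = K.index := fun K =>
    K.index_map_eq e.symm.surjective
      (by rw [(MonoidHom.ker_eq_bot_iff _).mpr e.symm.injective]; exact bot_le)
  have hmapmap : ∀ (H : Subgroup G), (H.map e.toMonoidHom).map e.symm.toMonoidHom = H := by
    intro H
    rw [Subgroup.map_map]
    have : (e.symm.toMonoidHom.comp e.toMonoidHom) = MonoidHom.id G := by
      ext x; simp
    rw [this, Subgroup.map_id]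
  have hmapmap' : ∀ (K : Subgroup G'), (K.map e.symm.toMonoidHom).map e.toMonoidHom = K := by
    intro K
    rw [Subgroup.map_map]
    have : (e.toMonoidHom.comp e.symm.toMonoidHom) = MonoidHom.id G' := by
      ext x; simp
    rw [this, Subgroup.map_id]
  apply Nat.card_congr
  refine
    { toFun := fun H => ⟨H.1.map e.toMonoidHom, by rw [hidx]; exact H.2.1,
        ⟨((H.1.equivMapOfInjective _ e.injective).symm.trans H.2.2.some).trans e⟩⟩
      invFun := fun K => ⟨K.1.map e.symm.toMonoidHom, by rw [hidx']; exact K.2.1,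
        ⟨((K.1.equivMapOfInjective _ e.symm.injective).symm.trans K.2.2.some).trans e.symm⟩⟩
      left_inv := fun H => Subtype.ext (hmapmap H.1)
      right_inv := fun K => Subtype.ext (hmapmap' K.1) }

/-- parameter space: m odd divisor, (a,d) with a*d = n/m, then (b,v1,v2) in box -/
def BigT (n : ℕ) : Finset (Σ _p : (Σ _m : ℕ, ℕ × ℕ), ℕ × ℕ × ℕ) :=
  ((n.divisors.filter fun m => Odd m).sigma fun m => (n / m).divisorsAntidiagonal).sigma
    fun p => Finset.range p.2.1 ×ˢ Finset.range p.2.1 ×ˢ Finset.range p.2.2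

lemma BigT_card (n : ℕ) :
    (BigT n).card = ∑ m ∈ n.divisors.filter fun m => Odd m, (n / m) * sigma1 (n / m) := by
  rw [BigT, Finset.card_sigma, Finset.sum_sigma]
  refine Finset.sum_congr rfl fun m hm => ?_
  calc ∑ p ∈ (n / m).divisorsAntidiagonal,
        (Finset.range p.1 ×ˢ Finset.range p.1 ×ˢ Finset.range p.2).card
      = ∑ p ∈ (n / m).divisorsAntidiagonal, p.1 * (p.1 * p.2) := by
        refine Finset.sum_congr rfl fun p _ => ?_
        simp [Finset.card_product, Finset.card_range]
    _ = ∑ a ∈ (n / m).divisors, a * (a * ((n / m) / a)) :=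
        Nat.sum_divisorsAntidiagonal (fun a d => a * (a * d))
    _ = ∑ a ∈ (n / m).divisors, a * (n / m) := by
        refine Finset.sum_congr rfl fun a ha => ?_
        rw [Nat.mul_div_cancel' (Nat.mem_divisors.mp ha).1]
    _ = (n / m) * sigma1 (n / m) := by
        rw [← Finset.sum_mul, sigma1, mul_comm]

lemma mem_BigT {n : ℕ} {x : Σ _p : (Σ _m : ℕ, ℕ × ℕ), ℕ × ℕ × ℕ} :
    x ∈ BigT n ↔ (Odd x.1.1 ∧ x.1.1 ∣ n ∧ n ≠ 0) ∧ (x.1.2.1 * x.1.2.2 = n / x.1.1 ∧ n / x.1.1 ≠ 0)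
      ∧ x.2.1 < x.1.2.1 ∧ x.2.2.1 < x.1.2.1 ∧ x.2.2.2 < x.1.2.2 := by
  obtain ⟨⟨m, a, d⟩, b, v1, v2⟩ := x
  simp only [BigT, Finset.mem_sigma, Finset.mem_filter, Nat.mem_divisors,
    Nat.mem_divisorsAntidiagonal, Finset.mem_product, Finset.mem_range]
  tauto

lemma HH_nat_index {n m a d b v1 v2 : ℕ} (hodd : Odd m) (hmn : m ∣ n)
    (had : a * d = n / m) (hn0 : n ≠ 0) :
    (HH (m : ℤ) a d b v1 v2).index = n ∧ 0 < m ∧ 0 < a ∧ 0 < d := by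
  have hm1 : 0 < m := Nat.pos_of_ne_zero (by rintro rfl; simp [Nat.odd_iff] at hodd)
  have hnm : 0 < n / m := Nat.div_pos (Nat.le_of_dvd (Nat.pos_of_ne_zero hn0) hmn) hm1
  have ha1 : 0 < a := by
    rcases Nat.eq_zero_or_pos a with h | h
    · rw [h] at had; simp at had; omega
    · exact h
  have hd1 : 0 < d := by
    rcases Nat.eq_zero_or_pos d with h | h
    · rw [h] at had; simp at had; omega
    · exact h
  refine ⟨?_, hm1, ha1, hd1⟩
  rw [index_HH _ _ _ _ _ _ (by exact_mod_cast hm1) (by exact_mod_cast ha1)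
    (by exact_mod_cast hd1)]
  rw [show ((a : ℤ) * d * m) = ((a * d * m : ℕ) : ℤ) by push_cast; ring, Int.toNat_natCast]
  rw [had, Nat.div_mul_cancel hmn]

lemma HH_nat_iso {m a d b v1 v2 : ℕ} (hodd : Odd m) (ha : 0 < a) (hd : 0 < d) :
    Nonempty ((HH (m : ℤ) a d b v1 v2) ≃* GG) :=
  HH_iso_of_odd (by rw [Int.even_coe_nat]; exact Nat.not_even_iff_odd.mpr hodd)
    (by exact_mod_cast ha) (by exact_mod_cast hd)

lemma BigT_props {n : ℕ} (hn : 0 < n) {x : Σ _p : (Σ _m : ℕ, ℕ × ℕ), ℕ × ℕ × ℕ}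
    (hx : x ∈ BigT n) :
    (HH x.1.1 x.1.2.1 x.1.2.2 x.2.1 x.2.2.1 x.2.2.2).index = n ∧
      Nonempty ((HH (x.1.1 : ℤ) x.1.2.1 x.1.2.2 x.2.1 x.2.2.1 x.2.2.2) ≃* GG) := by
  obtain ⟨h1, h2, _⟩ := mem_BigT.mp hx
  obtain ⟨hidx, -, ha, hd⟩ := HH_nat_index (m := x.1.1) (b := x.2.1) (v1 := x.2.2.1)
    (v2 := x.2.2.2) h1.1 h1.2.1 h2.1 h1.2.2
  exact ⟨hidx, HH_nat_iso h1.1 ha hd⟩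

lemma count_GG (n : ℕ) (hn : 0 < n) :
    Nat.card {K : Subgroup GG // K.index = n ∧ Nonempty (K ≃* GG)} = (BigT n).card := by
  rw [← Nat.card_eq_finsetCard]
  refine (Nat.card_congr (Equiv.ofBijective
    (fun x : {x // x ∈ BigT n} =>
      (⟨HH x.1.1.1 x.1.1.2.1 x.1.1.2.2 x.1.2.1 x.1.2.2.1 x.1.2.2.2,
        BigT_props hn x.2⟩ : {K : Subgroup GG // K.index = n ∧ Nonempty (K ≃* GG)}))
    ⟨?_, ?_⟩)).symm
  · -- injective
    rintro ⟨⟨⟨m, a, d⟩, b, v1, v2⟩, hx⟩ ⟨⟨⟨m', a', d'⟩, b', v1', v2'⟩, hy⟩ h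
    simp only [Subtype.mk.injEq] at h
    obtain ⟨⟨hodd, hmn, hn0⟩, ⟨had, hnm0⟩, hb, h1, h2⟩ := mem_BigT.mp hx
    obtain ⟨⟨hodd', hmn', -⟩, ⟨had', hnm0'⟩, hb', h1', h2'⟩ := mem_BigT.mp hy
    obtain ⟨-, hm, ha, hd⟩ := HH_nat_index (b := b) (v1 := v1) (v2 := v2) hodd hmn had hn0
    obtain ⟨-, hm', ha', hd'⟩ := HH_nat_index (b := b') (v1 := v1') (v2 := v2') hodd' hmn' had' hn0
    have key := HH_inj (by exact_mod_cast hm) (by exact_mod_cast ha) (by exact_mod_cast hd)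
      (by positivity) (by exact_mod_cast hb) (by positivity) (by exact_mod_cast h1)
      (by positivity) (by exact_mod_cast h2)
      (by exact_mod_cast hm') (by exact_mod_cast ha') (by exact_mod_cast hd')
      (by positivity) (by exact_mod_cast hb') (by positivity) (by exact_mod_cast h1')
      (by positivity) (by exact_mod_cast h2') h
    obtain ⟨e1, e2, e3, e4, e5, e6⟩ := key
    have f1 : m = m' := by exact_mod_cast e1
    have f2 : a = a' := by exact_mod_cast e2
    have f3 : d = d' := by exact_mod_cast e3
    have f4 : b = b' := by exact_mod_cast e4
    have f5 : v1 = v1' := by exact_mod_cast e5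
    have f6 : v2 = v2' := by exact_mod_cast e6
    subst f1; subst f2; subst f3; subst f4; subst f5; subst f6
    rfl
  · -- surjective
    rintro ⟨K, hidx, hiso⟩
    have hidx0 : K.index ≠ 0 := by omega
    obtain ⟨M, A, D, B, V1, V2, hM, hA, hD, hB0, hBA, hV10, hV1A, hV20, hV2D, hKeq⟩ :=
      exists_params hidx0
    have hModd : ¬ Even M := by
      intro heven
      exact HH_not_iso_of_even heven (hKeq ▸ hiso)
    rw [hKeq, index_HH _ _ _ _ _ _ hM hA hD] at hidx
    have hMc : ((M.toNat : ℕ) : ℤ) = M := Int.toNat_of_nonneg hM.le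
    have hAc : ((A.toNat : ℕ) : ℤ) = A := Int.toNat_of_nonneg hA.le
    have hDc : ((D.toNat : ℕ) : ℤ) = D := Int.toNat_of_nonneg hD.le
    have hBc : ((B.toNat : ℕ) : ℤ) = B := Int.toNat_of_nonneg hB0
    have hV1c : ((V1.toNat : ℕ) : ℤ) = V1 := Int.toNat_of_nonneg hV10
    have hV2c : ((V2.toNat : ℕ) : ℤ) = V2 := Int.toNat_of_nonneg hV20
    have h2 : ((A.toNat * D.toNat * M.toNat : ℕ) : ℤ) = A * D * M := by
      push_cast
      rw [hAc, hDc, hMc]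
    have hprod : A.toNat * D.toNat * M.toNat = n := by
      rw [← hidx, ← h2, Int.toNat_natCast]
    have hMpos : 0 < M.toNat := by omega
    have hmem : (⟨⟨M.toNat, (A.toNat, D.toNat)⟩, (B.toNat, V1.toNat, V2.toNat)⟩ :
        Σ _p : (Σ _m : ℕ, ℕ × ℕ), ℕ × ℕ × ℕ) ∈ BigT n := by
      refine mem_BigT.mpr ⟨⟨?_, ⟨A.toNat * D.toNat, by rw [← hprod]; ring⟩, hn.ne'⟩,
        ⟨?_, ?_⟩, ?_, ?_, ?_⟩
      · rw [← Nat.not_even_iff_odd]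
        intro heven
        apply hModd
        rw [← hMc]
        exact_mod_cast (Int.even_coe_nat M.toNat).mpr heven
      · rw [← hprod, Nat.mul_div_cancel _ hMpos]
      · rw [← hprod, Nat.mul_div_cancel _ hMpos]
        exact Nat.mul_ne_zero (by omega) (by omega)
      · show B.toNat < A.toNat
        omega
      · show V1.toNat < A.toNat
        omega
      · show V2.toNat < D.toNat
        omega
    refine ⟨⟨_, hmem⟩, ?_⟩
    apply Subtype.ext
    simp only []
    rw [hKeq]
    rw [hMc, hAc, hDc, hBc, hV1c, hV2c]

lemma arith (n : ℕ) (hn : 0 < n) :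
    ∑ m ∈ n.divisors.filter (fun m => Odd m), (n / m) * sigma1 (n / m) =
      omegaFn n - (if 2 ∣ n then omegaFn (n / 2) else 0) := by
  have homega : omegaFn n = ∑ m ∈ n.divisors, (n / m) * sigma1 (n / m) := by
    rw [omegaFn]
    exact (Nat.sum_div_divisors n (fun k => k * sigma1 k)).symm
  have hsplit := Finset.sum_filter_add_sum_filter_not n.divisors (fun m => Odd m)
      (fun m => (n / m) * sigma1 (n / m))
  by_cases h2 : 2 ∣ n
  · rw [if_pos h2]
    have hn2 : n / 2 ≠ 0 := by
      obtain ⟨k, rfl⟩ := h2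
      omega
    have hE : ∑ m ∈ n.divisors.filter (fun m => ¬ Odd m), (n / m) * sigma1 (n / m)
        = omegaFn (n / 2) := by
      have homega2 : omegaFn (n / 2)
          = ∑ m' ∈ (n / 2).divisors, ((n / 2) / m') * sigma1 ((n / 2) / m') := by
        rw [omegaFn]
        exact (Nat.sum_div_divisors (n / 2) (fun k => k * sigma1 k)).symm
      rw [homega2]
      refine Finset.sum_nbij' (fun m => m / 2) (fun m' => 2 * m') ?_ ?_ ?_ ?_ ?_
      · intro m hm
        obtain ⟨hm1, hm2⟩ := Finset.mem_filter.mp hm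
        obtain ⟨hdvd, -⟩ := Nat.mem_divisors.mp hm1
        rw [Nat.not_odd_iff_even] at hm2
        obtain ⟨k, rfl⟩ := (even_iff_two_dvd.mp hm2)
        obtain ⟨l, hl⟩ := hdvd
        refine Nat.mem_divisors.mpr ⟨⟨l, ?_⟩, hn2⟩
        show n / 2 = (2 * k) / 2 * l
        have hkk : (2 * k) / 2 = k := by omega
        rw [hkk]
        have : n = 2 * (k * l) := by rw [hl]; ring
        omega
      · intro m' hm'
        obtain ⟨hdvd, -⟩ := Nat.mem_divisors.mp hm'
        obtain ⟨l, hl⟩ := hdvd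
        refine Finset.mem_filter.mpr ⟨Nat.mem_divisors.mpr ⟨⟨l, ?_⟩, hn.ne'⟩, ?_⟩
        · have : n = 2 * (n / 2) := by omega
          rw [this, hl]; ring
        · rw [Nat.not_odd_iff_even]
          exact even_two_mul m'
      · intro m hm
        obtain ⟨-, hm2⟩ := Finset.mem_filter.mp hm
        rw [Nat.not_odd_iff_even] at hm2
        obtain ⟨k, rfl⟩ := (even_iff_two_dvd.mp hm2)
        show 2 * ((2 * k) / 2) = 2 * k
        omega
      · intro m' _
        show (2 * m') / 2 = m'
        omega
      · intro m hm
        obtain ⟨hm1, hm2⟩ := Finset.mem_filter.mp hm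
        rw [Nat.not_odd_iff_even] at hm2
        obtain ⟨k, rfl⟩ := (even_iff_two_dvd.mp hm2)
        show n / (2 * k) * sigma1 (n / (2 * k))
          = n / 2 / ((2 * k) / 2) * sigma1 (n / 2 / ((2 * k) / 2))
        have hkk : (2 * k) / 2 = k := by omega
        rw [hkk, Nat.div_div_eq_div_mul]
    omega
  · rw [if_neg h2]
    have hE : n.divisors.filter (fun m => ¬ Odd m) = ∅ := by
      rw [Finset.filter_eq_empty_iff]
      intro m hm
      obtain ⟨hdvd, -⟩ := Nat.mem_divisors.mp hm
      rw [Nat.not_odd_iff_even, even_iff_two_dvd]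
      intro hdvd2
      exact h2 (hdvd2.trans hdvd)
    rw [hE, Finset.sum_empty] at hsplit
    omega


/-- The number of index-`n` subgroups of `G₂` isomorphic to `G₂` equals `ω(n) − ω(n/2)`,
where `ω(n/2) = 0` for odd `n`. -/
theorem count_G2_subgroups (n : ℕ) (hn : 0 < n) :
    Nat.card {H : Subgroup G2 // H.index = n ∧ Nonempty (H ≃* G2)} =
      omegaFn n - (if 2 ∣ n then omegaFn (n / 2) else 0) := by
  rw [card_transfer_s15 G2iso.EE n, count_GG n hn, BigT_card, arith n hn]
end
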